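/- arXiv:2310.15049 — 5 statements merged into one kernel-verified Lean document; each statement's English description precedes it below -/
import Mathlib

section
/- Let R be a commutative ring and b1, b2, b3, b4, b5 ∈ R. Then there exists a unique formal power series u ∈ R[[t]] satisfying u = t^2·(1 + b1·u + b2·u^2 + b3·u^3 + b4·u^4 + b5·u^5). Moreover, the coefficient of t^2 in u is 1, and the coefficient of t^m in u is 0 for every odd m and for m = 0. -/
open PowerSeries

/-- The power series `u` satisfies the curve equation at infinity:
`u = t² · (1 + b₁u + b₂u² + b₃u³ + b₄u⁴ + b₅u⁵)`. -/
def SatisfiesCurveEqAtInfinity {R : Type*} [CommRing R] (b1 b2 b3 b4 b5 : R)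
    (u : PowerSeries R) : Prop :=
  u = X ^ 2 * (1 + C b1 * u + C b2 * u ^ 2 + C b3 * u ^ 3
      + C b4 * u ^ 4 + C b5 * u ^ 5)

namespace CurveAux

variable {R : Type*} [CommRing R]

noncomputable def Phi (b1 b2 b3 b4 b5 : R) (u : PowerSeries R) : PowerSeries R :=
  X ^ 2 * (1 + C b1 * u + C b2 * u ^ 2 + C b3 * u ^ 3
      + C b4 * u ^ 4 + C b5 * u ^ 5)

lemma phi_sub (b1 b2 b3 b4 b5 : R) (u v : PowerSeries R) :
    ∃ G : PowerSeries R, Phi b1 b2 b3 b4 b5 u - Phi b1 b2 b3 b4 b5 v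
      = X ^ 2 * ((u - v) * G) := by
  obtain ⟨c2, h2⟩ := sub_dvd_pow_sub_pow u v 2
  obtain ⟨c3, h3⟩ := sub_dvd_pow_sub_pow u v 3
  obtain ⟨c4, h4⟩ := sub_dvd_pow_sub_pow u v 4
  obtain ⟨c5, h5⟩ := sub_dvd_pow_sub_pow u v 5
  refine ⟨C b1 + C b2 * c2 + C b3 * c3 + C b4 * c4 + C b5 * c5, ?_⟩
  unfold Phi
  linear_combination (X ^ 2 * C b2 : PowerSeries R) * h2
    + (X ^ 2 * C b3 : PowerSeries R) * h3
    + (X ^ 2 * C b4 : PowerSeries R) * h4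
    + (X ^ 2 * C b5 : PowerSeries R) * h5

/-- key vanishing lemma: multiplying by `X^2 * d` pushes vanishing up by 2. -/
lemma coeff_X2_mul_zero {d G : PowerSeries R} {k : ℕ}
    (hd : ∀ i < k, coeff i d = 0) :
    ∀ m < k + 2, coeff m (X ^ 2 * (d * G)) = 0 := by
  intro m hm
  rw [coeff_X_pow_mul']
  split_ifs with h
  · rw [coeff_mul]
    refine Finset.sum_eq_zero fun p hp => ?_
    rw [Finset.HasAntidiagonal.mem_antidiagonal] at hp
    have hp1 : p.1 < k := by omega
    rw [hd p.1 hp1, zero_mul]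
  · rfl

lemma uniq (b1 b2 b3 b4 b5 : R) {u v : PowerSeries R}
    (hu : SatisfiesCurveEqAtInfinity b1 b2 b3 b4 b5 u)
    (hv : SatisfiesCurveEqAtInfinity b1 b2 b3 b4 b5 v) : u = v := by
  obtain ⟨G, hG⟩ := phi_sub b1 b2 b3 b4 b5 u v
  rw [show Phi b1 b2 b3 b4 b5 u = u from hu.symm,
      show Phi b1 b2 b3 b4 b5 v = v from hv.symm] at hG
  have key : ∀ m : ℕ, coeff m (u - v) = 0 := by
    intro m
    induction m using Nat.strong_induction_on with
    | _ m ih =>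
      rw [hG]
      exact coeff_X2_mul_zero (k := m) (fun i hi => ih i hi) m (by omega)
  ext m
  have := key m
  rw [map_sub, sub_eq_zero] at this
  exact this

/-- iterates of Phi starting from 0 -/
noncomputable def iter (b1 b2 b3 b4 b5 : R) : ℕ → PowerSeries R
  | 0 => 0
  | n + 1 => Phi b1 b2 b3 b4 b5 (iter b1 b2 b3 b4 b5 n)

lemma iter_stable (b1 b2 b3 b4 b5 : R) :
    ∀ n : ℕ, ∀ i < 2 * n + 2,
      coeff i (iter b1 b2 b3 b4 b5 (n + 1)) = coeff i (iter b1 b2 b3 b4 b5 n) := by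
  intro n
  induction n with
  | zero =>
    intro i hi
    show coeff i (Phi b1 b2 b3 b4 b5 0) = coeff i 0
    unfold Phi
    rw [coeff_X_pow_mul', if_neg (by omega)]
    simp
  | succ n ih =>
    intro i hi
    obtain ⟨G, hG⟩ := phi_sub b1 b2 b3 b4 b5 (iter b1 b2 b3 b4 b5 (n + 1))
      (iter b1 b2 b3 b4 b5 n)
    have hG' : iter b1 b2 b3 b4 b5 (n + 2) - iter b1 b2 b3 b4 b5 (n + 1)
        = X ^ 2 * ((iter b1 b2 b3 b4 b5 (n + 1) - iter b1 b2 b3 b4 b5 n) * G) := hG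
    have hsub : coeff i (iter b1 b2 b3 b4 b5 (n + 2) - iter b1 b2 b3 b4 b5 (n + 1)) = 0 := by
      rw [hG']
      refine coeff_X2_mul_zero (k := 2 * n + 2) (fun j hj => ?_) i (by omega)
      rw [map_sub, ih j hj, sub_self]
    rw [map_sub, sub_eq_zero] at hsub
    exact hsub

lemma iter_coeff_eq (b1 b2 b3 b4 b5 : R) (m : ℕ) :
    ∀ n, m ≤ n → coeff m (iter b1 b2 b3 b4 b5 n) = coeff m (iter b1 b2 b3 b4 b5 m) := by
  intro n
  induction n with
  | zero => intro hn; have : m = 0 := by omega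
            subst this; rfl
  | succ n ih =>
    intro hn
    rcases Nat.lt_or_ge m (n + 1) with h | h
    · rw [iter_stable b1 b2 b3 b4 b5 n m (by omega), ih (by omega)]
    · have : m = n + 1 := by omega
      subst this; rfl

noncomputable def limit (b1 b2 b3 b4 b5 : R) : PowerSeries R :=
  PowerSeries.mk fun m => coeff m (iter b1 b2 b3 b4 b5 m)

lemma coeff_limit (b1 b2 b3 b4 b5 : R) (m n : ℕ) (h : m ≤ n) :
    coeff m (limit b1 b2 b3 b4 b5) = coeff m (iter b1 b2 b3 b4 b5 n) := by
  rw [limit, coeff_mk, iter_coeff_eq b1 b2 b3 b4 b5 m n h]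

lemma limit_fixed (b1 b2 b3 b4 b5 : R) :
    SatisfiesCurveEqAtInfinity b1 b2 b3 b4 b5 (limit b1 b2 b3 b4 b5) := by
  show limit b1 b2 b3 b4 b5 = Phi b1 b2 b3 b4 b5 (limit b1 b2 b3 b4 b5)
  ext m
  obtain ⟨G, hG⟩ := phi_sub b1 b2 b3 b4 b5 (limit b1 b2 b3 b4 b5) (iter b1 b2 b3 b4 b5 m)
  have hdiff : coeff m (Phi b1 b2 b3 b4 b5 (limit b1 b2 b3 b4 b5)
      - Phi b1 b2 b3 b4 b5 (iter b1 b2 b3 b4 b5 m)) = 0 := by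
    rw [hG]
    refine coeff_X2_mul_zero (k := m + 1) (fun j hj => ?_) m (by omega)
    rw [map_sub, coeff_limit b1 b2 b3 b4 b5 j m (by omega), sub_self]
  rw [map_sub, sub_eq_zero] at hdiff
  rw [hdiff, show Phi b1 b2 b3 b4 b5 (iter b1 b2 b3 b4 b5 m) = iter b1 b2 b3 b4 b5 (m + 1)
    from rfl, coeff_limit b1 b2 b3 b4 b5 m (m + 1) (by omega)]

/-- odd-coefficient vanishing up to N is preserved by multiplication -/
lemma oddvanish_mul {f g : PowerSeries R} {N : ℕ}
    (hf : ∀ i ≤ N, Odd i → coeff i f = 0) (hg : ∀ i ≤ N, Odd i → coeff i g = 0) :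
    ∀ i ≤ N, Odd i → coeff i (f * g) = 0 := by
  intro i hi hodd
  rw [coeff_mul]
  refine Finset.sum_eq_zero fun p hp => ?_
  rw [Finset.HasAntidiagonal.mem_antidiagonal] at hp
  rcases Nat.even_or_odd p.1 with h1 | h1
  · have h2 : Odd p.2 := by
      rcases Nat.even_or_odd p.2 with h2 | h2
      · exfalso
        obtain ⟨a, ha⟩ := h1; obtain ⟨b, hb⟩ := h2; obtain ⟨c, hc⟩ := hodd
        omega
      · exact h2
    rw [hg p.2 (by omega) h2, mul_zero]
  · rw [hf p.1 (by omega) h1, zero_mul]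

lemma oddvanish_pow {f : PowerSeries R} {N : ℕ}
    (hf : ∀ i ≤ N, Odd i → coeff i f = 0) (k : ℕ) :
    ∀ i ≤ N, Odd i → coeff i (f ^ k) = 0 := by
  induction k with
  | zero =>
    intro i hi hodd
    simp only [pow_zero, coeff_one]
    rw [if_neg]
    rintro rfl
    exact (Nat.not_odd_zero) hodd
  | succ k ih =>
    rw [pow_succ]
    exact oddvanish_mul ih hf

lemma oddvanish_C_mul {f : PowerSeries R} {N : ℕ} (c : R)
    (hf : ∀ i ≤ N, Odd i → coeff i f = 0) :
    ∀ i ≤ N, Odd i → coeff i (C c * f) = 0 := by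
  intro i hi hodd
  rw [coeff_C_mul, hf i hi hodd, mul_zero]

lemma coeff_facts (b1 b2 b3 b4 b5 : R) (u : PowerSeries R)
    (hu : SatisfiesCurveEqAtInfinity b1 b2 b3 b4 b5 u) :
    coeff 2 u = 1 ∧ (∀ m : ℕ, Odd m → coeff m u = 0) ∧ coeff 0 u = 0 := by
  have heq : u = X ^ 2 * (1 + C b1 * u + C b2 * u ^ 2 + C b3 * u ^ 3
      + C b4 * u ^ 4 + C b5 * u ^ 5) := hu
  have h0 : coeff 0 u = 0 := by
    conv_lhs => rw [heq]
    rw [coeff_X_pow_mul', if_neg (by omega)]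
  have h0' : constantCoeff u = 0 := by
    rw [← coeff_zero_eq_constantCoeff_apply]; exact h0
  have h2 : coeff 2 u = 1 := by
    conv_lhs => rw [heq]
    rw [coeff_X_pow_mul', if_pos (by omega)]
    norm_num
    simp [h0']
  have hodd : ∀ m : ℕ, Odd m → coeff m u = 0 := by
    intro m
    induction m using Nat.strong_induction_on with
    | _ m ih =>
      intro hodd
      conv_lhs => rw [heq]
      rw [coeff_X_pow_mul']
      split_ifs with hle
      · -- m ≥ 2, m odd so m ≥ 3, m - 2 odd
        have hm3 : 3 ≤ m := by
          rcases hodd with ⟨k, hk⟩; omega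
        set N := m - 2 with hN
        have hNodd : Odd N := by rcases hodd with ⟨k, hk⟩; exact ⟨k - 1, by omega⟩
        have hu' : ∀ i ≤ N, Odd i → coeff i u = 0 := fun i hi hio => ih i (by omega) hio
        have h1' : ∀ i ≤ N, Odd i → coeff i (1 : PowerSeries R) = 0 := by
          intro i hi hio
          rw [coeff_one, if_neg]
          rintro rfl; exact Nat.not_odd_zero hio
        have hterm : ∀ (c : R) (k : ℕ), ∀ i ≤ N, Odd i → coeff i (C c * u ^ k) = 0 :=
          fun c k => oddvanish_C_mul c (oddvanish_pow hu' k)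
        have hsum : ∀ i ≤ N, Odd i → coeff i (1 + C b1 * u + C b2 * u ^ 2
            + C b3 * u ^ 3 + C b4 * u ^ 4 + C b5 * u ^ 5) = 0 := by
          intro i hi hio
          simp only [map_add]
          have e0 := hterm b1 1 i hi hio
          rw [pow_one] at e0
          rw [h1' i hi hio, e0, hterm b2 2 i hi hio, hterm b3 3 i hi hio,
            hterm b4 4 i hi hio, hterm b5 5 i hi hio]
          ring
        exact hsum N le_rfl hNodd
      · rfl
  exact ⟨h2, hodd, h0⟩

end CurveAux

theorem stmt0 {R : Type*} [CommRing R] (b1 b2 b3 b4 b5 : R) :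
    (∃! u : PowerSeries R, SatisfiesCurveEqAtInfinity b1 b2 b3 b4 b5 u) ∧
    ∀ u : PowerSeries R, SatisfiesCurveEqAtInfinity b1 b2 b3 b4 b5 u →
      coeff 2 u = 1 ∧ (∀ m : ℕ, Odd m → coeff m u = 0) ∧ coeff 0 u = 0 := by
  constructor
  · exact ⟨CurveAux.limit b1 b2 b3 b4 b5, CurveAux.limit_fixed b1 b2 b3 b4 b5,
      fun v hv => CurveAux.uniq b1 b2 b3 b4 b5 hv (CurveAux.limit_fixed b1 b2 b3 b4 b5)⟩
  · exact fun u hu => CurveAux.coeff_facts b1 b2 b3 b4 b5 u hu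
end

section
/- Let R be a commutative ring, b1,…,b5 ∈ R, and let u ∈ R[[t]] be the unique formal power series with u = t^2·(1 + b1·u + b2·u^2 + b3·u^3 + b4·u^4 + b5·u^5). Then t·u′(t) = ∑_{n≥1} 2·A(n)·t^{2n} in R[[t]], where u′ is the formal derivative of u. Equivalently, for every n ≥ 1 the coefficient of t^{2n} in t·u′ equals 2·A(n), and all odd-degree coefficients of t·u′ vanish. (This encodes the expansion dx/(2y) = (∑_{n≥1} A(n)·t^{2n})·dt of the differential ω1 at infinity, since dx/(2y) = (t/2)·du on the curve.) -/
open PowerSeries Finset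

/-- `A n = ∑ (n!/(k₀!k₁!k₂!k₃!k₄!k₅!)) b₁^{k₁}b₂^{k₂}b₃^{k₃}b₄^{k₄}b₅^{k₅}`, the sum over
all `(k₀,…,k₅) ∈ ℕ⁶` with `k₀+k₁+k₂+k₃+k₄+k₅ = n` and `k₁+2k₂+3k₃+4k₄+5k₅+1 = n`. -/
noncomputable def Acoef {R : Type*} [CommRing R] (b1 b2 b3 b4 b5 : R) (n : ℕ) : R :=
  ∑ k ∈ (Fintype.piFinset fun _ : Fin 6 => Finset.range (n + 1)) |>.filter
      (fun k => (∑ i, k i) = n ∧ k 1 + 2 * k 2 + 3 * k 3 + 4 * k 4 + 5 * k 5 + 1 = n),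
    (Nat.multinomial Finset.univ k : R) *
      (b1 ^ k 1 * b2 ^ k 2 * b3 ^ k 3 * b4 ^ k 4 * b5 ^ k 5)


lemma res_torsion {S : Type*} [CommRing S] (g h : PowerSeries S) (hgh : g * h = 1) (p : ℕ) :
    ((p : S) + 1) * coeff (2*p+3) (h ^ (p+2) * derivative S (X^2 * g)) = 0 := by
  have hH' : derivative S h = -(h^2 * derivative S g) := by
    have h0 : derivative S (g * h) = 0 := by rw [hgh]; exact Derivation.map_one_eq_zero _
    rw [Derivation.leibniz, smul_eq_mul, smul_eq_mul] at h0
    have h2 := congrArg (fun z => h * z) h0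
    simp only [mul_zero, mul_add] at h2
    have h1 : h * (g * derivative S h) = derivative S h := by
      rw [← mul_assoc, mul_comm h g, hgh, one_mul]
    rw [h1] at h2
    have h3 : derivative S h + h^2 * derivative S g = 0 := by rw [← h2]; ring_nf
    exact eq_neg_of_add_eq_zero_left h3
  have hkey : derivative S (h ^ (p+1)) = -((p+1 : ℕ) • (h^(p+2) * derivative S g)) := by
    rw [Derivation.leibniz_pow, hH']
    simp only [Nat.add_sub_cancel, smul_eq_mul, smul_neg, mul_neg, neg_neg]
    rw [← neg_eq_iff_eq_neg]
    congr 1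
    rw [nsmul_eq_mul, nsmul_eq_mul]
    ring
  have hDX2 : derivative S (X^2 * g : PowerSeries S) = X^2 * derivative S g + C 2 * (X * g) := by
    rw [Derivation.leibniz, smul_eq_mul, smul_eq_mul, Derivation.leibniz_pow, derivative_X]
    simp only [Nat.add_sub_cancel, pow_one, smul_eq_mul, mul_one]
    rw [nsmul_eq_mul]
    have h2c : ((2:ℕ) : PowerSeries S) = C 2 := by
      rw [← map_natCast (C (R := S)) 2]
      norm_num
    rw [h2c]
    ring
  have hrel : ((p:S)+1) * coeff (2*p+1) (h ^ (p+2) * derivative S g)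
      = -(coeff (2*p+2) (h ^ (p+1)) * (2*(p:S)+2)) := by
    have h4 := congrArg (coeff (2*p+1)) hkey
    rw [coeff_derivative, map_neg] at h4
    have hcast : coeff (2*p+1) ((p+1 : ℕ) • (h^(p+2) * derivative S g))
        = ((p:S)+1) * coeff (2*p+1) (h ^ (p+2) * derivative S g) := by
      rw [nsmul_eq_mul, ← map_natCast (C (R := S)) (p+1), coeff_C_mul]
      push_cast
      ring
    rw [hcast] at h4
    push_cast at h4
    linear_combination h4
  have hgh2 : g * h^(p+2) = h^(p+1) := by
    rw [pow_succ', ← mul_assoc, hgh, one_mul]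
  have hsplit : h ^ (p+2) * derivative S (X^2 * g)
      = X^2 * (h^(p+2) * derivative S g) + C 2 * (X * h^(p+1)) := by
    rw [hDX2]
    linear_combination (C 2) * X * hgh2
  have hT : coeff (2*p+3) (h ^ (p+2) * derivative S (X^2 * g))
      = coeff (2*p+1) (h ^ (p+2) * derivative S g)
        + 2 * coeff (2*p+2) (h ^ (p+1)) := by
    rw [hsplit, map_add, coeff_C_mul]
    rw [show 2*p+3 = (2*p+1)+2 from by ring]
    rw [coeff_X_pow_mul]
    rw [show (2*p+1)+2 = (2*p+2)+1 from by ring]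
    rw [coeff_succ_X_mul]
  rw [hT, mul_add, hrel]
  push_cast
  ring

lemma map_derivative' {R R' : Type*} [CommRing R] [CommRing R'] (f : R →+* R') (w : PowerSeries R) :
    PowerSeries.map f (derivative R w) = derivative R' (PowerSeries.map f w) := by
  ext n
  rw [coeff_map, coeff_derivative, coeff_derivative, coeff_map, map_mul]
  congr 1
  push_cast
  simp

lemma res_aux {R : Type*} [CommRing R] (g h : PowerSeries R) (hg : constantCoeff g = 1)
    (hgh : g * h = 1) (p : ℕ) :
    coeff (2*p+3) (h ^ (p+2) * derivative R (X^2 * g)) = 0 := by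
  set S := MvPolynomial ℕ ℤ with hS
  set G : PowerSeries S := PowerSeries.mk fun i => if i = 0 then 1 else MvPolynomial.X (i-1)
    with hGdef
  have hG0 : constantCoeff G = 1 := by
    have : coeff 0 G = 1 := by rw [hGdef, coeff_mk]; simp
    rwa [coeff_zero_eq_constantCoeff] at this
  set HS : PowerSeries S := invOfUnit G 1 with hHS
  have hGH : G * HS = 1 := mul_invOfUnit G 1 (by rw [hG0]; rfl)
  have hTS : coeff (2*p+3) (HS ^ (p+2) * derivative S (X^2 * G)) = 0 := by
    have h1 := res_torsion G HS hGH p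
    have hp : ((p:S)+1) ≠ 0 := Nat.cast_add_one_ne_zero p
    exact (mul_eq_zero.mp h1).resolve_left hp
  set f : S →+* R := MvPolynomial.eval₂Hom (Int.castRingHom R) (fun i => coeff (i+1) g)
    with hf
  have hmapG : PowerSeries.map f G = g := by
    ext n
    rw [coeff_map]
    cases n with
    | zero =>
      rw [hGdef, coeff_mk]
      simp only [if_true, eq_self_iff_true, map_one]
      rw [coeff_zero_eq_constantCoeff, hg]
    | succ n =>
      rw [hGdef, coeff_mk]
      simp only [Nat.succ_ne_zero, if_neg, Nat.add_sub_cancel, hf, if_false]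
      rw [MvPolynomial.eval₂Hom_X']
  have hmapH : PowerSeries.map f HS = h := by
    have h1 : g * PowerSeries.map f HS = 1 := by
      rw [← hmapG, ← map_mul, hGH, map_one]
    calc PowerSeries.map f HS = PowerSeries.map f HS * (g * h) := by rw [hgh, mul_one]
    _ = h * (g * PowerSeries.map f HS) := by ring
    _ = h := by rw [h1, mul_one]
  have hmap : PowerSeries.map f (HS ^ (p+2) * derivative S (X^2 * G))
      = h ^ (p+2) * derivative R (X^2 * g) := by
    rw [map_mul, map_pow, hmapH, map_derivative', map_mul, map_pow, PowerSeries.map_X, hmapG]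
  have := congrArg (coeff (2*p+3)) hmap
  rw [coeff_map, hTS, map_zero] at this
  exact this.symm

-- the Leibniz expansion of derivative (X^2 * g)
lemma deriv_X2_mul {R : Type*} [CommRing R] (g : PowerSeries R) :
    derivative R (X^2 * g) = X^2 * derivative R g + C 2 * (X * g) := by
  rw [Derivation.leibniz, smul_eq_mul, smul_eq_mul, Derivation.leibniz_pow, derivative_X]
  simp only [Nat.add_sub_cancel, pow_one, smul_eq_mul, mul_one]
  rw [nsmul_eq_mul]
  have h2c : ((2:ℕ) : PowerSeries R) = C 2 := by
    rw [← map_natCast (C (R := R)) 2]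
    norm_num
  rw [h2c]
  ring

theorem stmt1 {R : Type*} [CommRing R] (b1 b2 b3 b4 b5 : R) (u : PowerSeries R)
    (hu : SatisfiesCurveEqAtInfinity b1 b2 b3 b4 b5 u) :
    (∀ n : ℕ, 1 ≤ n →
        coeff (2 * n) (X * derivative R u) = 2 * Acoef b1 b2 b3 b4 b5 n) ∧
    ∀ m : ℕ, Odd m → coeff m (X * derivative R u) = 0 := by
  rw [SatisfiesCurveEqAtInfinity] at hu
  set g : PowerSeries R := 1 + C b1 * u + C b2 * u ^ 2 + C b3 * u ^ 3
      + C b4 * u ^ 4 + C b5 * u ^ 5 with hgdef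
  have hu0 : constantCoeff u = 0 := by
    rw [hu, map_mul, map_pow, constantCoeff_X]
    ring
  have hg0 : constantCoeff g = 1 := by
    rw [hgdef]
    simp only [map_add, map_mul, map_pow, map_one, constantCoeff_C, hu0]
    ring
  set h : PowerSeries R := invOfUnit g 1 with hhdef
  have hgh : g * h = 1 := mul_invOfUnit g 1 (by rw [hg0]; rfl)
  -- all odd coefficients of u vanish
  have hodd : ∀ m, Odd m → coeff m u = 0 := by
    intro m
    induction m using Nat.strong_induction_on with
    | _ m ih =>
      intro hm
      have hpow : ∀ i, ∀ d, d < m → Odd d → coeff d (u ^ i) = 0 := by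
        intro i
        induction i with
        | zero =>
          intro d hd hodd'
          rw [pow_zero, coeff_one, if_neg]
          rw [Nat.odd_iff] at hodd'
          omega
        | succ i ihh =>
          intro d hd hodd'
          rw [pow_succ, coeff_mul]
          apply Finset.sum_eq_zero
          rintro ⟨a, c⟩ hac
          rw [Finset.HasAntidiagonal.mem_antidiagonal] at hac
          by_cases ha : Odd a
          · rw [ihh a (by omega) ha, zero_mul]
          · have hc : Odd c := by
              rw [Nat.odd_iff] at hodd' ⊢
              rw [Nat.not_odd_iff] at ha
              omega
            rw [ih c (by omega) hc, mul_zero]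
      rcases Nat.lt_or_ge m 2 with h2 | h2
      · have hm1 : m = 1 := by
          obtain ⟨k, hk⟩ := hm
          omega
        subst hm1
        rw [hu, coeff_X_pow_mul', if_neg (by omega)]
      · obtain ⟨d, rfl⟩ : ∃ d, m = d + 2 := ⟨m - 2, by omega⟩
        have hdodd : Odd d := by
          rw [Nat.odd_iff] at hm ⊢
          omega
        rw [hu, coeff_X_pow_mul, hgdef]
        simp only [map_add, coeff_C_mul, coeff_one]
        rw [ih d (by omega) hdodd]
        rw [hpow 2 d (by omega) hdodd, hpow 3 d (by omega) hdodd,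
          hpow 4 d (by omega) hdodd, hpow 5 d (by omega) hdodd]
        rw [if_neg (by rw [Nat.odd_iff] at hdodd; omega)]
        ring
  constructor
  · intro n hn
    obtain ⟨n', rfl⟩ : ∃ n', n = n' + 1 := ⟨n - 1, by omega⟩
    rw [show 2*(n'+1) = (2*n'+1)+1 from by ring, coeff_succ_X_mul]
    -- evaluation of the elementary coefficients
    have heval : ∀ w : ℕ, coeff (2*n'+1) (u ^ w * (h ^ (n'+1) * derivative R u))
        = if w = n' then 2 else 0 := by
      intro w
      rcases lt_trichotomy w n' with hw | rfl | hw
      · obtain ⟨p, rfl⟩ : ∃ p, n' = w + p + 1 := ⟨n' - w - 1, by omega⟩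
        rw [if_neg (by omega)]
        have hgh' : g ^ w * h ^ w = 1 := by rw [← mul_pow, hgh, one_pow]
        have e1 : u ^ w * (h ^ (w+p+1+1) * derivative R u)
            = X^(2*w) * (h^(p+2) * derivative R u) := by
          calc u ^ w * (h ^ (w+p+1+1) * derivative R u)
              = (X^2*g) ^ w * (h ^ (w+p+1+1) * derivative R u) := by rw [← hu]
            _ = X^(2*w) * (h^(p+2) * derivative R u) * (g^w * h^w) := by
                rw [mul_pow, pow_mul]
                ring
            _ = X^(2*w) * (h^(p+2) * derivative R u) := by rw [hgh', mul_one]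
        rw [e1, show 2*(w+p+1)+1 = (2*p+3) + 2*w from by ring, coeff_X_pow_mul]
        rw [hu]
        exact res_aux g h hg0 hgh p
      · rw [if_pos rfl]
        have e2 : u ^ w * (h ^ (w+1) * derivative R u)
            = X^(2*w) * (h * derivative R u) := by
          calc u ^ w * (h ^ (w+1) * derivative R u)
              = (X^2*g) ^ w * (h ^ (w+1) * derivative R u) := by rw [← hu]
            _ = X^(2*w) * (h * derivative R u) * (g^w * h^w) := by
                rw [mul_pow, pow_mul]
                ring
            _ = X^(2*w) * (h * derivative R u) := by
                rw [← mul_pow, hgh, one_pow, mul_one]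
        rw [e2, show 2*w+1 = 1 + 2*w from by ring, coeff_X_pow_mul]
        have e3 : h * derivative R u = X^2 * (h * derivative R g) + C 2 * (X * (g * h)) := by
          rw [hu, deriv_X2_mul]
          ring
        rw [e3, hgh, mul_one, map_add, coeff_C_mul, coeff_X_pow_mul', if_neg (by omega)]
        rw [coeff_one_X]
        ring
      · rw [if_neg (by omega)]
        have e4 : u ^ w * (h ^ (n'+1) * derivative R u)
            = X^(2*w) * (g ^ w * (h ^ (n'+1) * derivative R u)) := by
          calc u ^ w * (h ^ (n'+1) * derivative R u)
              = (X^2*g) ^ w * (h ^ (n'+1) * derivative R u) := by rw [← hu]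
            _ = X^(2*w) * (g ^ w * (h ^ (n'+1) * derivative R u)) := by
                rw [mul_pow, pow_mul]
                ring
        rw [e4, coeff_X_pow_mul', if_neg (by omega)]
    -- expand g^(n'+1) and sum up
    have h7 : g^(n'+1) * (h^(n'+1) * derivative R u) = derivative R u := by
      rw [← mul_assoc, ← mul_pow, hgh, one_pow, one_mul]
    rw [← h7]
    set b : Fin 6 → R := ![1, b1, b2, b3, b4, b5] with hb
    have hgsum : g = ∑ i : Fin 6, C (b i) * u ^ (i : ℕ) := by
      rw [Fin.sum_univ_six, hgdef]
      norm_num [hb, show ((2:Fin 6):ℕ) = 2 from rfl, show ((3:Fin 6):ℕ) = 3 from rfl,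
        show ((4:Fin 6):ℕ) = 4 from rfl, show ((5:Fin 6):ℕ) = 5 from rfl,
        show (![(1:R),b1,b2,b3,b4,b5] : Fin 6 → R) 5 = b5 from rfl,
          show (![(1:R),b1,b2,b3,b4,b5] : Fin 6 → R) 2 = b2 from rfl, show (![(1:R),b1,b2,b3,b4,b5] : Fin 6 → R) 3 = b3 from rfl,
          show (![(1:R),b1,b2,b3,b4,b5] : Fin 6 → R) 4 = b4 from rfl]
    rw [hgsum, Finset.sum_pow_eq_sum_piAntidiag, Finset.sum_mul, map_sum]
    have hterm : ∀ k ∈ piAntidiag (univ : Finset (Fin 6)) (n'+1),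
        coeff (2*n'+1) ((Nat.multinomial univ k : PowerSeries R)
            * (∏ i, (C (b i) * u ^ (i:ℕ)) ^ k i) * (h^(n'+1) * derivative R u))
        = (if (∑ i : Fin 6, (i:ℕ) * k i) = n' then
            2 * ((Nat.multinomial univ k : R) * ∏ i, (b i) ^ k i) else 0) := by
      intro k _
      have hprod : ∏ i, (C (b i) * u ^ (i:ℕ)) ^ k i
          = C (∏ i, (b i) ^ k i) * u ^ (∑ i : Fin 6, (i:ℕ) * k i) := by
        rw [map_prod, ← Finset.prod_pow_eq_pow_sum, ← Finset.prod_mul_distrib]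
        apply Finset.prod_congr rfl
        intro i _
        rw [mul_pow, map_pow, pow_mul]
      rw [hprod]
      have hassoc : (Nat.multinomial univ k : PowerSeries R)
            * (C (∏ i, (b i) ^ k i) * u ^ (∑ i : Fin 6, (i:ℕ) * k i))
            * (h^(n'+1) * derivative R u)
          = (Nat.multinomial univ k : PowerSeries R) * (C (∏ i, (b i) ^ k i)
            * (u ^ (∑ i : Fin 6, (i:ℕ) * k i) * (h^(n'+1) * derivative R u))) := by
        ring
      rw [hassoc, ← map_natCast (C (R := R)) (Nat.multinomial univ k), coeff_C_mul, coeff_C_mul,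
        heval]
      split_ifs
      · ring
      · ring
    rw [Finset.sum_congr rfl hterm, ← Finset.sum_filter]
    have hsets : (piAntidiag (univ : Finset (Fin 6)) (n'+1)).filter
          (fun k => (∑ i : Fin 6, (i:ℕ) * k i) = n')
        = ((Fintype.piFinset fun _ : Fin 6 => Finset.range ((n'+1) + 1)) |>.filter
            (fun k => (∑ i, k i) = n'+1
              ∧ k 1 + 2 * k 2 + 3 * k 3 + 4 * k 4 + 5 * k 5 + 1 = n'+1)) := by
      ext k
      simp only [Finset.mem_filter, mem_piAntidiag, Fintype.mem_piFinset, Finset.mem_range,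
        Finset.mem_univ, ne_eq, implies_true, and_true]
      have hw6 : ∑ i : Fin 6, (i:ℕ) * k i = k 1 + 2*k 2 + 3*k 3 + 4*k 4 + 5*k 5 := by
        rw [Fin.sum_univ_six (fun i => (i:ℕ) * k i)]
        simp only [show ((0:Fin 6):ℕ) = 0 from rfl, show ((1:Fin 6):ℕ) = 1 from rfl,
          show ((2:Fin 6):ℕ) = 2 from rfl, show ((3:Fin 6):ℕ) = 3 from rfl,
          show ((4:Fin 6):ℕ) = 4 from rfl, show ((5:Fin 6):ℕ) = 5 from rfl]
        ring
      constructor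
      · rintro ⟨hsum, hw⟩
        have hble : ∀ i, k i ≤ n' + 1 := fun i =>
          hsum ▸ Finset.single_le_sum (fun j _ => Nat.zero_le (k j)) (Finset.mem_univ i)
        exact ⟨fun i => Nat.lt_succ_of_le (hble i), hsum, by rw [hw6] at hw; omega⟩
      · rintro ⟨hbound, hsum, hw⟩
        exact ⟨hsum, by rw [hw6]; omega⟩
    rw [hsets]
    rw [Acoef, Finset.mul_sum]
    apply Finset.sum_congr rfl
    intro k _
    rw [Fin.prod_univ_six (fun i => (b i) ^ k i)]
    norm_num [hb, show (![(1:R),b1,b2,b3,b4,b5] : Fin 6 → R) 5 = b5 from rfl,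
          show (![(1:R),b1,b2,b3,b4,b5] : Fin 6 → R) 2 = b2 from rfl, show (![(1:R),b1,b2,b3,b4,b5] : Fin 6 → R) 3 = b3 from rfl,
          show (![(1:R),b1,b2,b3,b4,b5] : Fin 6 → R) 4 = b4 from rfl]
  · intro m hm
    obtain ⟨m', rfl⟩ : ∃ m', m = m' + 1 := by
      obtain ⟨k, hk⟩ := hm
      exact ⟨m - 1, by omega⟩
    rw [coeff_succ_X_mul, coeff_derivative, hodd (m'+1) hm, zero_mul]
end

section
/- Fix real numbers b1,…,b5. There exists ε > 0 such that for every real t0 with 0 < |t0| < ε, if u0 denotes the unique root of f_{t0} in the closed unit disc (which is real with 0 < u0 < 1), then Jensen's formula gives log u0 = 2·log|t0| − (1/(2π))·∫_0^{2π} log‖1 − g_{t0}(e^{iθ})‖ dθ. -/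
open Real intervalIntegral

/-- The polynomial function `f_{t₀}(u) = u − t₀²(1 + b₁u + b₂u² + b₃u³ + b₄u⁴ + b₅u⁵)`. -/
noncomputable def fpol (b1 b2 b3 b4 b5 t0 : ℝ) (u : ℂ) : ℂ :=
  u - (t0 : ℂ) ^ 2 * (1 + (b1 : ℂ) * u + (b2 : ℂ) * u ^ 2 + (b3 : ℂ) * u ^ 3
      + (b4 : ℂ) * u ^ 4 + (b5 : ℂ) * u ^ 5)

/-- `g_{t₀}(w) = t₀²(w⁻¹ + b₁ + b₂w + b₃w² + b₄w³ + b₅w⁴)`. -/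
noncomputable def gfun (b1 b2 b3 b4 b5 t0 : ℝ) (w : ℂ) : ℂ :=
  (t0 : ℂ) ^ 2 * (w⁻¹ + (b1 : ℂ) + (b2 : ℂ) * w + (b3 : ℂ) * w ^ 2
      + (b4 : ℂ) * w ^ 3 + (b5 : ℂ) * w ^ 4)



lemma slit_aux {a w : ℂ} (ha : ‖a‖ < 1) (hw : ‖w‖ ≤ 1) : 1 - a * w ∈ Complex.slitPlane := by
  refine Or.inl ?_
  have h1 : ‖a * w‖ < 1 := by
    calc ‖a * w‖ = ‖a‖ * ‖w‖ := norm_mul _ _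
    _ ≤ ‖a‖ * 1 := by nlinarith [norm_nonneg (a : ℂ)]
    _ < 1 := by simpa using ha
  have h2 : (a * w).re ≤ ‖a * w‖ := Complex.re_le_norm _
  simp only [Complex.sub_re, Complex.one_re]
  linarith

lemma cont_aux {a : ℂ} (ha : ‖a‖ < 1) :
    Continuous fun θ : ℝ => Complex.log (1 - a * Complex.exp (θ * Complex.I)) := by
  rw [continuous_iff_continuousAt]
  intro θ
  have : ContinuousAt (fun θ : ℝ => 1 - a * Complex.exp (θ * Complex.I)) θ := by fun_prop
  exact this.clog (slit_aux ha (by simp [Complex.norm_exp_ofReal_mul_I]))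

lemma integral_clog_zero {a : ℂ} (ha : ‖a‖ < 1) :
    (∫ θ in (0:ℝ)..(2*π), Complex.log (1 - a * Complex.exp (θ * Complex.I))) = 0 := by
  set g : ℂ → ℂ := fun w => Complex.log (1 - a * w) with hg
  have hdiff : DifferentiableOn ℂ g (Metric.closedBall 0 1) := by
    intro w hw
    simp only [Metric.mem_closedBall, dist_zero_right] at hw
    have : DifferentiableAt ℂ g w :=
      (((differentiable_const (1:ℂ)).sub ((differentiable_const a).mul differentiable_id)) w).clog
        (slit_aux ha hw)
    exact this.differentiableWithinAt
  have hcl : DiffContOnCl ℂ g (Metric.ball 0 1) := by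
    apply DifferentiableOn.diffContOnCl
    rwa [closure_ball (0:ℂ) one_ne_zero]
  have key := hcl.circleIntegral_sub_inv_smul (Metric.mem_ball_self one_pos)
  have g0 : g 0 = 0 := by simp [hg]
  rw [g0, smul_zero] at key
  rw [circleIntegral] at key
  have : ∀ θ : ℝ, deriv (circleMap 0 1) θ • (circleMap 0 1 θ - 0)⁻¹ • g (circleMap 0 1 θ)
      = Complex.I * g (Complex.exp (θ * Complex.I)) := by
    intro θ
    rw [deriv_circleMap]
    have hne : circleMap 0 1 θ ≠ 0 := circleMap_ne_center one_ne_zero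
    have : circleMap 0 1 θ = Complex.exp (θ * Complex.I) := by
      simp [circleMap, Complex.ofReal_one, mul_comm]
    rw [sub_zero, smul_eq_mul, smul_eq_mul, ← this]
    field_simp
  rw [intervalIntegral.integral_congr (fun θ _ => this θ)] at key
  rw [intervalIntegral.integral_const_mul] at key
  simpa [Complex.I_ne_zero] using key

lemma integral_log_one_sub_mul {a : ℂ} (ha : ‖a‖ < 1) :
    (∫ θ in (0:ℝ)..(2*π), Real.log ‖1 - a * Complex.exp (θ * Complex.I)‖) = 0 := by
  have hint : ∀ b c : ℝ, IntervalIntegrable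
      (fun θ : ℝ => Complex.log (1 - a * Complex.exp (θ * Complex.I))) MeasureTheory.volume b c :=
    fun b c => (cont_aux ha).intervalIntegrable b c
  have := Complex.reCLM.intervalIntegral_comp_comm (hint 0 (2*π))
  rw [integral_clog_zero ha] at this
  simp only [Complex.reCLM_apply, map_zero] at this
  refine Eq.trans (intervalIntegral.integral_congr fun θ _ => ?_) this
  have hne : (1 - a * Complex.exp (θ * Complex.I)) ≠ 0 := by
    intro h
    have := slit_aux ha (w := Complex.exp (θ * Complex.I)) (by simp [Complex.norm_exp_ofReal_mul_I])
    rw [h] at this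
    simpa using this
  rw [Complex.log_re]

lemma norm_exp_sub (a : ℂ) (θ : ℝ) :
    ‖Complex.exp (θ * Complex.I) - a‖ = ‖1 - (starRingEnd ℂ a) * Complex.exp (θ * Complex.I)‖ := by
  have h1 : ‖Complex.exp (θ * Complex.I) - a‖
      = ‖Complex.exp (θ * Complex.I)‖ * ‖1 - a * Complex.exp (-(θ * Complex.I))‖ := by
    rw [← norm_mul]
    congr 1
    rw [mul_sub, mul_one]
    congr 1
    rw [mul_comm a, ← mul_assoc, ← Complex.exp_add]
    simp
  rw [h1, Complex.norm_exp_ofReal_mul_I, one_mul, ← RCLike.norm_conj]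
  congr 1
  rw [map_sub, map_one, map_mul]
  congr 1
  rw [← Complex.exp_conj]
  congr 1
  simp [Complex.conj_ofReal]

lemma integral_log_exp_sub {a : ℂ} (ha : ‖a‖ ≠ 1) :
    (∫ θ in (0:ℝ)..(2*π), Real.log ‖Complex.exp (θ * Complex.I) - a‖)
      = 2 * π * Real.log (max 1 ‖a‖) := by
  rcases lt_or_gt_of_ne ha with h | h
  · have : max 1 ‖a‖ = 1 := max_eq_left h.le
    rw [this, Real.log_one, mul_zero]
    have hc : ‖(starRingEnd ℂ) a‖ < 1 := by rwa [RCLike.norm_conj]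
    rw [intervalIntegral.integral_congr (fun θ _ => by rw [norm_exp_sub a θ])]
    exact integral_log_one_sub_mul hc
  · have ha0 : a ≠ 0 := by rintro rfl; simp at h; linarith
    have hinv : ‖a⁻¹‖ < 1 := by
      rw [norm_inv]
      rw [inv_lt_one_iff₀]
      right; exact h
    have hsplit : ∀ θ : ℝ, Real.log ‖Complex.exp (θ * Complex.I) - a‖
        = Real.log ‖a‖ + Real.log ‖1 - a⁻¹ * Complex.exp (θ * Complex.I)‖ := by
      intro θ
      have : Complex.exp (θ * Complex.I) - a = (-a) * (1 - a⁻¹ * Complex.exp (θ * Complex.I)) := by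
        field_simp
        ring
      rw [this, norm_mul, norm_neg]
      rw [Real.log_mul (by positivity) ?_]
      · intro hz
        rw [norm_eq_zero, sub_eq_zero] at hz
        have := congrArg norm hz
        rw [norm_mul, norm_one, norm_inv, Complex.norm_exp_ofReal_mul_I, mul_one] at this
        rw [eq_comm, inv_eq_one] at this
        exact ha this
    rw [intervalIntegral.integral_congr (fun θ _ => hsplit θ)]
    have hi1 : IntervalIntegrable (fun _ : ℝ => Real.log ‖a‖) MeasureTheory.volume 0 (2*π) :=
      intervalIntegrable_const
    have hi2 : IntervalIntegrable
        (fun θ : ℝ => Real.log ‖1 - a⁻¹ * Complex.exp (θ * Complex.I)‖) MeasureTheory.volume 0 (2*π) := by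
      apply Continuous.intervalIntegrable
      have hc := cont_aux hinv
      have : ∀ θ : ℝ, Real.log ‖1 - a⁻¹ * Complex.exp (θ * Complex.I)‖
          = (Complex.log (1 - a⁻¹ * Complex.exp (θ * Complex.I))).re := by
        intro θ
        rw [Complex.log_re]
      simp_rw [this]
      exact Complex.continuous_re.comp hc
    rw [intervalIntegral.integral_add hi1 hi2, integral_log_one_sub_mul hinv, add_zero,
      intervalIntegral.integral_const, smul_eq_mul, max_eq_right h.le]
    ring_nf

lemma cont_prod (s : Multiset ℂ) :
    Continuous fun θ : ℝ => ((s.map (fun a => Complex.exp (θ * Complex.I) - a)).prod) := by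
  induction s using Multiset.induction with
  | empty => simpa using continuous_const
  | cons x s ih =>
    simp only [Multiset.map_cons, Multiset.prod_cons]
    exact Continuous.mul (by fun_prop) ih

lemma prod_ne_zero' {s : Multiset ℂ} (hs : ∀ a ∈ s, ‖a‖ ≠ 1) (θ : ℝ) :
    ((s.map (fun a => Complex.exp (θ * Complex.I) - a)).prod) ≠ 0 := by
  rw [Ne, Multiset.prod_eq_zero_iff]
  intro hmem
  rw [Multiset.mem_map] at hmem
  obtain ⟨a, ha, he⟩ := hmem
  rw [sub_eq_zero] at he
  apply hs a ha
  rw [← he, Complex.norm_exp_ofReal_mul_I]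

lemma cont_log_prod {s : Multiset ℂ} (hs : ∀ a ∈ s, ‖a‖ ≠ 1) :
    Continuous fun θ : ℝ =>
      Real.log ‖(s.map (fun a => Complex.exp (θ * Complex.I) - a)).prod‖ := by
  rw [continuous_iff_continuousAt]
  intro θ
  exact ((cont_prod s).norm.continuousAt).log (by simpa using prod_ne_zero' hs θ)

lemma integral_log_prod (s : Multiset ℂ) (hs : ∀ a ∈ s, ‖a‖ ≠ 1) :
    (∫ θ in (0:ℝ)..(2*π),
        Real.log ‖(s.map (fun a => Complex.exp (θ * Complex.I) - a)).prod‖)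
      = (s.map (fun a => 2 * π * Real.log (max 1 ‖a‖))).sum := by
  induction s using Multiset.induction with
  | empty => simp
  | cons x s ih =>
    have hx : ‖x‖ ≠ 1 := hs x (Multiset.mem_cons_self x s)
    have hs' : ∀ a ∈ s, ‖a‖ ≠ 1 := fun a ha => hs a (Multiset.mem_cons_of_mem ha)
    have hpt : ∀ θ : ℝ,
        Real.log ‖((x ::ₘ s).map (fun a => Complex.exp (θ * Complex.I) - a)).prod‖
          = Real.log ‖Complex.exp (θ * Complex.I) - x‖
            + Real.log ‖(s.map (fun a => Complex.exp (θ * Complex.I) - a)).prod‖ := by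
      intro θ
      rw [Multiset.map_cons, Multiset.prod_cons, norm_mul]
      apply Real.log_mul
      · simp only [Ne, norm_eq_zero, sub_eq_zero]
        intro he
        exact hx (by rw [← he, Complex.norm_exp_ofReal_mul_I])
      · simpa using prod_ne_zero' hs' θ
    rw [intervalIntegral.integral_congr (fun θ _ => hpt θ)]
    have hi1 : IntervalIntegrable
        (fun θ : ℝ => Real.log ‖Complex.exp (θ * Complex.I) - x‖)
        MeasureTheory.volume 0 (2*π) := by
      apply Continuous.intervalIntegrable
      have : ∀ a ∈ ({x} : Multiset ℂ), ‖a‖ ≠ 1 := by simpa using hx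
      simpa using cont_log_prod this
    have hi2 : IntervalIntegrable
        (fun θ : ℝ => Real.log ‖(s.map (fun a => Complex.exp (θ * Complex.I) - a)).prod‖)
        MeasureTheory.volume 0 (2*π) := (cont_log_prod hs').intervalIntegrable _ _
    rw [intervalIntegral.integral_add hi1 hi2, ih hs', integral_log_exp_sub hx,
      Multiset.map_cons, Multiset.sum_cons]

lemma norm_mprod (s : Multiset ℂ) : ‖s.prod‖ = (s.map (fun z => ‖z‖)).prod := by
  induction s using Multiset.induction with
  | empty => simp
  | cons x s ih => simp [norm_mul, ih]

lemma log_msum (s : Multiset ℝ) (h : ∀ x ∈ s, x ≠ 0) :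
    Real.log s.prod = (s.map Real.log).sum := by
  induction s using Multiset.induction with
  | empty => simp
  | cons x s ih =>
    rw [Multiset.prod_cons, Multiset.map_cons, Multiset.sum_cons,
      Real.log_mul (h x (Multiset.mem_cons_self x s)) ?_, ih (fun y hy => h y (Multiset.mem_cons_of_mem hy))]
    rw [Ne, Multiset.prod_eq_zero_iff]
    intro hz
    exact h 0 (Multiset.mem_cons_of_mem hz) rfl


set_option maxHeartbeats 1000000 in
theorem stmt7 (b1 b2 b3 b4 b5 : ℝ) :
    ∃ ε > (0 : ℝ), ∀ t0 : ℝ, 0 < |t0| → |t0| < ε →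
      ∀ u0 : ℝ, 0 < u0 → u0 < 1 → fpol b1 b2 b3 b4 b5 t0 (u0 : ℂ) = 0 →
        (∀ z : ℂ, ‖z‖ ≤ 1 → fpol b1 b2 b3 b4 b5 t0 z = 0 → z = (u0 : ℂ)) →
        Real.log u0 = 2 * Real.log |t0| -
          (1 / (2 * π)) * ∫ θ in (0 : ℝ)..(2 * π),
            Real.log ‖(1 : ℂ) - gfun b1 b2 b3 b4 b5 t0 (Complex.exp (θ * Complex.I))‖ := by
  classical
  set M : ℝ := |b1| + 2*|b2| + 3*|b3| + 4*|b4| + 5*|b5| with hM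
  have hM0 : 0 ≤ M := by positivity
  refine ⟨Real.sqrt (1/(1+M)), Real.sqrt_pos.mpr (by positivity), ?_⟩
  intro t0 ht0 htε u0 hu0 hu1 hroot huniq
  have ht0' : t0 ≠ 0 := by intro h; rw [h] at ht0; simp at ht0
  have ht2 : t0^2 < 1/(1+M) := by
    have h1 : t0^2 = |t0|^2 := (sq_abs t0).symm
    rw [h1]
    calc |t0|^2 < (Real.sqrt (1/(1+M)))^2 := by
          apply pow_lt_pow_left₀ htε (abs_nonneg t0)
          norm_num
      _ = 1/(1+M) := Real.sq_sqrt (by positivity)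
  have htM : t0^2 * M < 1 := by
    have h1 : t0^2 * (1+M) < 1 := by
      rw [div_eq_mul_inv, one_mul] at ht2
      calc t0^2 * (1+M) < (1+M)⁻¹ * (1+M) := by
            apply mul_lt_mul_of_pos_right ht2 (by positivity)
        _ = 1 := inv_mul_cancel₀ (by positivity)
    nlinarith [sq_nonneg t0]
  -- the polynomial
  set P : Polynomial ℂ :=
    Polynomial.X - Polynomial.C ((t0:ℂ)^2) *
      (1 + Polynomial.C (b1:ℂ) * Polynomial.X + Polynomial.C (b2:ℂ) * Polynomial.X^2
       + Polynomial.C (b3:ℂ) * Polynomial.X^3 + Polynomial.C (b4:ℂ) * Polynomial.X^4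
       + Polynomial.C (b5:ℂ) * Polynomial.X^5) with hPdef
  have hPeval : ∀ z : ℂ, P.eval z = fpol b1 b2 b3 b4 b5 t0 z := by
    intro z
    simp [hPdef, fpol]
  have hP0eval : P.eval 0 = -(t0:ℂ)^2 := by simp [hPdef]
  have hPne : P ≠ 0 := by
    intro h
    rw [h] at hP0eval
    simp at hP0eval
    exact ht0' (by exact_mod_cast hP0eval)
  -- derivative nonzero at u0
  have hpow2 : u0^2 ≤ 1 := by nlinarith
  have hpow3 : u0^3 ≤ 1 := by nlinarith
  have hpow4 : u0^4 ≤ 1 := by nlinarith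
  have hXle : b1 + 2*b2*u0 + 3*b3*u0^2 + 4*b4*u0^3 + 5*b5*u0^4 ≤ M := by
    have e1 : b1 ≤ |b1| := le_abs_self b1
    have e2 : b2*u0 ≤ |b2| := by nlinarith [le_abs_self b2, abs_nonneg b2]
    have e3 : b3*u0^2 ≤ |b3| := by nlinarith [le_abs_self b3, abs_nonneg b3, sq_nonneg u0]
    have e4 : b4*u0^3 ≤ |b4| := by nlinarith [le_abs_self b4, abs_nonneg b4, pow_pos hu0 3]
    have e5 : b5*u0^4 ≤ |b5| := by nlinarith [le_abs_self b5, abs_nonneg b5, pow_pos hu0 4]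
    rw [hM]; nlinarith
  have hrpos : 0 < 1 - t0^2 * (b1 + 2*b2*u0 + 3*b3*u0^2 + 4*b4*u0^3 + 5*b5*u0^4) := by
    have : t0^2 * (b1 + 2*b2*u0 + 3*b3*u0^2 + 4*b4*u0^3 + 5*b5*u0^4) ≤ t0^2 * M :=
      mul_le_mul_of_nonneg_left hXle (sq_nonneg t0)
    linarith
  have hderiv : P.derivative.eval (u0:ℂ) ≠ 0 := by
    have hev : P.derivative.eval (u0:ℂ)
        = ((1 - t0^2 * (b1 + 2*b2*u0 + 3*b3*u0^2 + 4*b4*u0^3 + 5*b5*u0^4) : ℝ) : ℂ) := by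
      simp only [hPdef, Polynomial.derivative_sub, Polynomial.derivative_X,
        Polynomial.derivative_C_mul, Polynomial.derivative_add, Polynomial.derivative_one,
        Polynomial.derivative_X_pow, Polynomial.eval_sub, Polynomial.eval_add, Polynomial.eval_mul,
        Polynomial.eval_one, Polynomial.eval_C, Polynomial.eval_X, Polynomial.eval_pow,
        Polynomial.eval_natCast, Polynomial.eval_zero]
      push_cast
      ring
    rw [hev]
    exact_mod_cast (ne_of_gt hrpos)
  have hroot' : P.IsRoot (u0:ℂ) := by
    rw [Polynomial.IsRoot, hPeval]; exact hroot
  have hmult : P.rootMultiplicity (u0:ℂ) = 1 := by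
    have h1 : 0 < P.rootMultiplicity (u0:ℂ) := (Polynomial.rootMultiplicity_pos hPne).mpr hroot'
    have h2 : ¬ 1 < P.rootMultiplicity (u0:ℂ) := by
      rw [Polynomial.one_lt_rootMultiplicity_iff_isRoot hPne]
      rintro ⟨-, h⟩
      exact hderiv h
    omega
  have hcard : Multiset.card P.roots = P.natDegree :=
    Polynomial.splits_iff_card_roots.mp (IsAlgClosed.splits P)
  have hfac := Polynomial.C_leadingCoeff_mul_prod_multiset_X_sub_C hcard
  set c : ℂ := P.leadingCoeff with hc
  have hc0 : c ≠ 0 := Polynomial.leadingCoeff_ne_zero.mpr hPne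
  have hcount : P.roots.count (u0:ℂ) = 1 := by rw [Polynomial.count_roots]; exact hmult
  have hmem : (u0:ℂ) ∈ P.roots := by
    rw [← Multiset.count_pos, hcount]; norm_num
  set s' : Multiset ℂ := P.roots.erase (u0:ℂ) with hs'
  have hcons : P.roots = (u0:ℂ) ::ₘ s' := (Multiset.cons_erase hmem).symm
  have hs'u : (u0:ℂ) ∉ s' := by
    rw [← Multiset.count_pos, Multiset.count_erase_self, hcount]
    norm_num
  have hs'big : ∀ a ∈ s', 1 < ‖a‖ := by
    intro a ha
    by_contra hle
    push_neg at hle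
    have haroot : P.IsRoot a := (Polynomial.mem_roots hPne).mp (Multiset.mem_of_mem_erase ha)
    have : a = (u0:ℂ) := huniq a hle (by rw [← hPeval]; exact haroot)
    rw [this] at ha
    exact hs'u ha
  have hnu0 : ‖(u0:ℂ)‖ = u0 := by
    rw [Complex.norm_real, Real.norm_eq_abs, abs_of_pos hu0]
  have hnorm1 : ∀ a ∈ P.roots, ‖a‖ ≠ 1 := by
    intro a ha
    rw [hcons, Multiset.mem_cons] at ha
    rcases ha with rfl | ha
    · rw [hnu0]; linarith
    · exact ne_of_gt (hs'big a ha)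
  -- evaluation via the factorization
  have hevprod : ∀ w : ℂ, P.eval w = c * ((P.roots.map (fun a => w - a)).prod) := by
    intro w
    conv_lhs => rw [← hfac]
    rw [Polynomial.eval_mul, Polynomial.eval_C, Polynomial.eval_multiset_prod, Multiset.map_map]
    congr 1
    exact congrArg Multiset.prod (Multiset.map_congr rfl (fun a _ => by
      simp only [Function.comp_apply, Polynomial.eval_sub, Polynomial.eval_X, Polynomial.eval_C]))
  have hcpos : 0 < ‖c‖ := norm_pos_iff.mpr hc0
  -- pointwise identity between the integrands
  have hgf : ∀ θ : ℝ, ‖(1:ℂ) - gfun b1 b2 b3 b4 b5 t0 (Complex.exp (θ*Complex.I))‖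
      = ‖c‖ * ‖((P.roots.map (fun a => Complex.exp (θ*Complex.I) - a)).prod)‖ := by
    intro θ
    set w : ℂ := Complex.exp (θ*Complex.I) with hw
    have hwne : w ≠ 0 := Complex.exp_ne_zero _
    have hwnorm : ‖w‖ = 1 := Complex.norm_exp_ofReal_mul_I θ
    have h1 : w * ((1:ℂ) - gfun b1 b2 b3 b4 b5 t0 w) = P.eval w := by
      have hinv : w * w⁻¹ = 1 := mul_inv_cancel₀ hwne
      rw [hPeval]
      simp only [gfun, fpol]
      linear_combination (-(t0:ℂ)^2) * hinv
    have h3 := congrArg norm h1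
    rw [norm_mul, hwnorm, one_mul, hevprod w, norm_mul] at h3
    exact h3
  have hlogpt : ∀ θ : ℝ, Real.log ‖(1:ℂ) - gfun b1 b2 b3 b4 b5 t0 (Complex.exp (θ*Complex.I))‖
      = Real.log ‖c‖
        + Real.log ‖((P.roots.map (fun a => Complex.exp (θ*Complex.I) - a)).prod)‖ := by
    intro θ
    rw [hgf θ]
    exact Real.log_mul (ne_of_gt hcpos) (norm_ne_zero_iff.mpr (prod_ne_zero' hnorm1 θ))
  set p' : ℝ := (s'.map (fun z => ‖z‖)).prod with hp'def
  have hprod0 : ‖c‖ * (u0 * p') = t0^2 := by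
    have h0 : ‖P.eval 0‖ = t0^2 := by
      rw [hP0eval, norm_neg, norm_pow, Complex.norm_real, Real.norm_eq_abs, sq_abs]
    rw [hevprod 0, norm_mul, norm_mprod, Multiset.map_map] at h0
    have hmapeq : (P.roots.map ((fun z : ℂ => ‖z‖) ∘ fun a => (0:ℂ) - a))
        = P.roots.map (fun z : ℂ => ‖z‖) :=
      Multiset.map_congr rfl (fun a _ => by simp)
    rw [hmapeq, hcons, Multiset.map_cons, Multiset.prod_cons, hnu0] at h0
    exact h0
  have hpp : 0 < p' := by
    by_contra hle
    push_neg at hle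
    have h2 : 0 ≤ u0 * (-p') := mul_nonneg hu0.le (neg_nonneg.mpr hle)
    have h3 : 0 ≤ ‖c‖ * (u0 * -p') := mul_nonneg (norm_nonneg c) h2
    have h3' : ‖c‖ * (u0 * -p') = -(‖c‖ * (u0 * p')) := by ring
    have h4 : 0 < t0^2 := by rw [← sq_abs]; exact pow_pos ht0 2
    rw [h3', hprod0] at h3
    linarith
  -- the value of the integral
  have hI : (∫ θ in (0:ℝ)..(2*π),
        Real.log ‖(1:ℂ) - gfun b1 b2 b3 b4 b5 t0 (Complex.exp (θ * Complex.I))‖)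
      = 2*π*Real.log ‖c‖ + 2*π*Real.log p' := by
    rw [intervalIntegral.integral_congr (fun θ _ => hlogpt θ)]
    have hint2 : IntervalIntegrable
        (fun θ : ℝ => Real.log ‖((P.roots.map (fun a => Complex.exp (θ*Complex.I) - a)).prod)‖)
        MeasureTheory.volume 0 (2*π) := (cont_log_prod hnorm1).intervalIntegrable _ _
    rw [intervalIntegral.integral_add intervalIntegrable_const hint2,
      intervalIntegral.integral_const, integral_log_prod P.roots hnorm1]
    have hsumeq : (P.roots.map (fun a => 2 * π * Real.log (max 1 ‖a‖))).sum
        = 2*π*Real.log p' := by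
      rw [hcons, Multiset.map_cons, Multiset.sum_cons, hnu0,
        max_eq_left hu1.le, Real.log_one, mul_zero, zero_add]
      have hc1 : (s'.map (fun a => 2 * π * Real.log (max 1 ‖a‖)))
          = s'.map (fun a : ℂ => 2 * π * Real.log ‖a‖) :=
        Multiset.map_congr rfl (fun a ha => by rw [max_eq_right (hs'big a ha).le])
      rw [hc1]
      have hc2 : (s'.map (fun a : ℂ => 2 * π * Real.log ‖a‖)).sum
          = 2 * π * (s'.map (fun a : ℂ => Real.log ‖a‖)).sum := by
        rw [← Multiset.sum_map_mul_left]
      rw [hc2]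
      congr 1
      rw [hp'def, log_msum _ (fun x hx => ?_), Multiset.map_map]
      · rfl
      · rw [Multiset.mem_map] at hx
        obtain ⟨a, ha, rfl⟩ := hx
        exact ne_of_gt (lt_trans one_pos (hs'big a ha))
    rw [hsumeq]
    simp only [sub_zero, smul_eq_mul]
  rw [hI]
  -- final log arithmetic
  have hcp : ‖c‖ * p' = t0^2 / u0 := by
    rw [eq_div_iff (ne_of_gt hu0)]
    linear_combination hprod0
  have hlogs : Real.log ‖c‖ + Real.log p' = 2*Real.log |t0| - Real.log u0 := by
    rw [← Real.log_mul (ne_of_gt hcpos) (ne_of_gt hpp), hcp,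
      Real.log_div (by positivity) (ne_of_gt hu0), ← sq_abs, Real.log_pow]
    push_cast
    ring
  have hπ : (2*π) ≠ 0 := by positivity
  have hsimp : (1/(2*π)) * (2*π*Real.log ‖c‖ + 2*π*Real.log p')
      = Real.log ‖c‖ + Real.log p' := by
    field_simp
  rw [hsimp, hlogs]
  ring
end

section
/- Let R be a commutative ring, b1,…,b5 ∈ R, and let u ∈ R[[t]] be the unique formal power series with u = t^2·(1 + b1·u + b2·u^2 + b3·u^3 + b4·u^4 + b5·u^5). Then for every n ≥ 1, n times the coefficient of t^{2n} in u equals ∑ (n!/((k2+2k3+3k4+4k5+1)!·k1!·k2!·k3!·k4!·k5!))·b1^{k1}·b2^{k2}·b3^{k3}·b4^{k4}·b5^{k5}, the sum over all (k1,…,k5) ∈ ℕ^5 with k1+2k2+3k3+4k4+5k5 = n−1 (each summand being a multinomial coefficient, a natural number, times a monomial in the b_i). -/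
open PowerSeries Finset

/-- For a tuple `(k₁,…,k₅)`, the multinomial coefficient
`n!/((k₂+2k₃+3k₄+4k₅+1)!·k₁!·k₂!·k₃!·k₄!·k₅!)` where
`n = k₁+2k₂+3k₃+4k₄+5k₅+1 = (k₂+2k₃+3k₄+4k₅+1) + k₁+k₂+k₃+k₄+k₅`;
here `k i` denotes `k_{i+1}`. -/
def lagrangeMultinomial (k : Fin 5 → ℕ) : ℕ :=
  Nat.multinomial Finset.univ
    (Fin.cons (k 1 + 2 * k 2 + 3 * k 3 + 4 * k 4 + 1) k : Fin 6 → ℕ)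

namespace Stmt10Aux

set_option linter.unusedSectionVars false

section General

variable {R : Type*} [CommRing R]

noncomputable def step (b1 b2 b3 b4 b5 : R) (w : PowerSeries R) : PowerSeries R :=
  X ^ 2 * (1 + C b1 * w + C b2 * w ^ 2 + C b3 * w ^ 3
      + C b4 * w ^ 4 + C b5 * w ^ 5)

lemma coeff_pow_congr {w w' : R⟦X⟧} {m : ℕ}
    (h : ∀ j < m, coeff j w = coeff j w') (i : ℕ) :
    ∀ j < m, coeff j (w ^ i) = coeff j (w' ^ i) := by
  induction i with
  | zero => simp
  | succ i ih =>
    intro j hj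
    rw [pow_succ, pow_succ, coeff_mul, coeff_mul]
    refine Finset.sum_congr rfl fun p hp => ?_
    rw [Finset.HasAntidiagonal.mem_antidiagonal] at hp
    rw [ih p.1 (lt_of_le_of_lt (Nat.le.intro hp) hj),
      h p.2 (lt_of_le_of_lt (Nat.le.intro ((add_comm p.2 p.1).trans hp)) hj)]

lemma coeff_step_congr (b1 b2 b3 b4 b5 : R) {w w' : R⟦X⟧} {m : ℕ}
    (h : ∀ j < m, coeff j w = coeff j w') :
    coeff m (step b1 b2 b3 b4 b5 w) = coeff m (step b1 b2 b3 b4 b5 w') := by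
  unfold step
  rw [coeff_X_pow_mul', coeff_X_pow_mul']
  split_ifs with hm
  · have hd : m - 2 < m := by omega
    simp only [map_add, coeff_C_mul]
    rw [coeff_pow_congr h 2 _ hd, coeff_pow_congr h 3 _ hd,
      coeff_pow_congr h 4 _ hd, coeff_pow_congr h 5 _ hd, h _ hd]
  · rfl

lemma uniq {b1 b2 b3 b4 b5 : R} {u w : R⟦X⟧}
    (hu : u = step b1 b2 b3 b4 b5 u) (hw : w = step b1 b2 b3 b4 b5 w) : u = w := by
  ext m
  induction m using Nat.strong_induction_on with
  | _ m ih =>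
    conv_lhs => rw [hu]
    conv_rhs => rw [hw]
    exact coeff_step_congr _ _ _ _ _ ih

noncomputable def sol (b1 b2 b3 b4 b5 : R) : R⟦X⟧ :=
  PowerSeries.mk fun m => coeff m ((step b1 b2 b3 b4 b5)^[m + 1] 0)

lemma coeff_iterate (b1 b2 b3 b4 b5 : R) :
    ∀ m N, m < N → coeff m ((step b1 b2 b3 b4 b5)^[N] 0)
      = coeff m (sol b1 b2 b3 b4 b5) := by
  intro m
  induction m using Nat.strong_induction_on with
  | _ m ih =>
    intro N hN
    obtain ⟨N', rfl⟩ : ∃ N', N = N' + 1 := ⟨N - 1, by omega⟩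
    have hsol : coeff m (sol b1 b2 b3 b4 b5)
        = coeff m ((step b1 b2 b3 b4 b5) ((step b1 b2 b3 b4 b5)^[m] 0)) := by
      rw [sol, coeff_mk, Function.iterate_succ_apply']
    rw [Function.iterate_succ_apply', hsol]
    refine coeff_step_congr _ _ _ _ _ fun j hj => ?_
    rw [ih j hj N' (by omega), ih j hj m hj]

lemma sol_eq (b1 b2 b3 b4 b5 : R) :
    sol b1 b2 b3 b4 b5 = step b1 b2 b3 b4 b5 (sol b1 b2 b3 b4 b5) := by
  ext m
  have h1 : coeff m (sol b1 b2 b3 b4 b5)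
      = coeff m ((step b1 b2 b3 b4 b5) ((step b1 b2 b3 b4 b5)^[m] 0)) := by
    rw [sol, coeff_mk, Function.iterate_succ_apply']
  rw [h1]
  exact coeff_step_congr _ _ _ _ _ fun j hj => coeff_iterate _ _ _ _ _ j m hj

lemma map_sat {S : Type*} [CommRing S] (f : R →+* S) {b1 b2 b3 b4 b5 : R} {u : R⟦X⟧}
    (hu : u = step b1 b2 b3 b4 b5 u) :
    PowerSeries.map f u = step (f b1) (f b2) (f b3) (f b4) (f b5) (PowerSeries.map f u) := by
  conv_lhs => rw [hu]
  unfold step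
  simp only [map_mul, map_add, map_pow, map_one, PowerSeries.map_X, PowerSeries.map_C]

end General

section QAlg

variable {A : Type*} [CommRing A] [Algebra ℚ A]

lemma nat_isUnit (j : ℕ) (hj : j ≠ 0) : IsUnit ((j : ℕ) : A) := by
  have h : IsUnit ((j : ℚ)) := isUnit_iff_ne_zero.mpr (by exact_mod_cast hj)
  have := h.map (algebraMap ℚ A)
  rwa [map_natCast] at this

variable {u q V : A⟦X⟧}

lemma deriv_u (hu : u = X ^ 2 * q) :
    d⁄dX A u = 2 * (X * q) + X ^ 2 * d⁄dX A q := by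
  conv_lhs => rw [hu]
  rw [Derivation.leibniz, Derivation.leibniz_pow, derivative_X]
  simp only [smul_eq_mul]
  ring

lemma deriv_V (hV : V * q = 1) : d⁄dX A V = -(V ^ 2 * d⁄dX A q) := by
  have h1 : V • d⁄dX A q + q • d⁄dX A V = 0 := by
    rw [← Derivation.leibniz, hV, Derivation.map_one_eq_zero]
  have h1' : V * d⁄dX A q + q * d⁄dX A V = 0 := by simpa [smul_eq_mul] using h1
  linear_combination ((-1 : A⟦X⟧) * d⁄dX A V) * hV + V * h1'

lemma E_one (hu : u = X ^ 2 * q) (hV : V * q = 1) :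
    coeff 1 (V * d⁄dX A u) = 2 := by
  have h2 : V * d⁄dX A u = (V * q) * (2 * X) + X ^ 2 * (V * d⁄dX A q) := by
    rw [deriv_u hu]; ring
  rw [h2, hV, one_mul, map_add, coeff_X_pow_mul' (V * d⁄dX A q) 2 1]
  norm_num
  exact map_ofNat ((constantCoeff (R := A))) 2

lemma E_big (hu : u = X ^ 2 * q) (hV : V * q = 1) (i : ℕ) :
    coeff (2 * i + 3) (V ^ (i + 2) * d⁄dX A u) = 0 := by
  have h2 : V ^ (i + 2) * d⁄dX A u
      = (V * q) * (2 * (X * V ^ (i + 1))) + X ^ 2 * (V ^ (i + 2) * d⁄dX A q) := by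
    rw [deriv_u hu]; ring
  rw [h2, hV, one_mul]
  set c := coeff (2 * i + 2) (V ^ (i + 1)) with hc
  set T := coeff (2 * i + 1) (V ^ (i + 2) * d⁄dX A q) with hT
  have e1 : coeff (2 * i + 3) (2 * (X * V ^ (i + 1))) = 2 * c := by
    rw [show (2 : A⟦X⟧) = C 2 from (map_ofNat (C (R := A)) 2).symm, coeff_C_mul, hc,
      show 2 * i + 3 = (2 * i + 2) + 1 by omega, coeff_succ_X_mul]
  have e2 : coeff (2 * i + 3) (X ^ 2 * (V ^ (i + 2) * d⁄dX A q)) = T := by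
    rw [show 2 * i + 3 = (2 * i + 1) + 2 by omega, coeff_X_pow_mul]
  rw [map_add, e1, e2]
  have hD : d⁄dX A (V ^ (i + 1)) = -((i + 1 : ℕ) • (V ^ (i + 2) * d⁄dX A q)) := by
    rw [Derivation.leibniz_pow, deriv_V hV]
    simp only [smul_eq_mul, nsmul_eq_mul, Nat.add_sub_cancel]
    push_cast
    ring
  have hcoeff : ((i + 1 : ℕ) : A) * T = -(c * (2 * i + 2 : ℕ)) := by
    have := congrArg (coeff (2 * i + 1)) hD
    rw [coeff_derivative, show 2 * i + 1 + 1 = 2 * i + 2 by omega, map_neg,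
      map_nsmul, nsmul_eq_mul] at this
    rw [hT, hc]
    push_cast at this ⊢
    linear_combination this
  have hmain : ((i + 1 : ℕ) : A) * (2 * c + T) = 0 := by
    rw [mul_add, hcoeff]
    push_cast
    ring
  exact ((nat_isUnit (i + 1) (by omega)).mul_right_eq_zero).mp hmain

theorem key (b1 b2 b3 b4 b5 : A) (u : A⟦X⟧)
    (hu : SatisfiesCurveEqAtInfinity b1 b2 b3 b4 b5 u) (n : ℕ) (hn : 1 ≤ n) :
    (n : A) * coeff (2 * n) u =
      ∑ k ∈ (Fintype.piFinset fun _ : Fin 5 => Finset.range n) |>.filter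
          (fun k => k 0 + 2 * k 1 + 3 * k 2 + 4 * k 3 + 5 * k 4 = n - 1),
        (lagrangeMultinomial k : A) *
          (b1 ^ k 0 * b2 ^ k 1 * b3 ^ k 2 * b4 ^ k 3 * b5 ^ k 4) := by
  classical
  set q : A⟦X⟧ := 1 + C b1 * u + C b2 * u ^ 2 + C b3 * u ^ 3
      + C b4 * u ^ 4 + C b5 * u ^ 5 with hq_def
  have hu' : u = X ^ 2 * q := hu
  have hq0 : (constantCoeff (R := A)) q = 1 := by
    have h0 : (constantCoeff (R := A)) u = 0 := by
      rw [hu']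
      simp [map_mul, map_pow, constantCoeff_X]
    rw [hq_def]
    simp [map_add, map_mul, map_pow, h0]
  have hq : IsUnit q := isUnit_iff_constantCoeff.mpr (hq0 ▸ isUnit_one)
  obtain ⟨Q, hQ⟩ := hq
  set V : A⟦X⟧ := ↑Q⁻¹ with hV_def
  have hV : V * q = 1 := by rw [hV_def, ← hQ]; exact Q.inv_mul
  have hupow : ∀ m : ℕ, u ^ m = X ^ (2 * m) * q ^ m := by
    intro m
    conv_lhs => rw [hu']
    rw [mul_pow, ← pow_mul]
  set g : Fin 6 → A⟦X⟧ := ![1, C b1 * u, C b2 * u ^ 2, C b3 * u ^ 3,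
      C b4 * u ^ 4, C b5 * u ^ 5] with hg_def
  have hg0 : g 0 = 1 := rfl
  have hg1 : g 1 = C b1 * u := rfl
  have hg2 : g 2 = C b2 * u ^ 2 := rfl
  have hg3 : g 3 = C b3 * u ^ 3 := rfl
  have hg4 : g 4 = C b4 * u ^ 4 := rfl
  have hg5 : g 5 = C b5 * u ^ 5 := rfl
  have hqg : q = ∑ i, g i := by
    rw [Fin.sum_univ_six, hg0, hg1, hg2, hg3, hg4, hg5, hq_def]
  have hprod : ∀ k : Fin 6 → ℕ, ∏ i, g i ^ k i
      = C (b1 ^ k 1 * b2 ^ k 2 * b3 ^ k 3 * b4 ^ k 4 * b5 ^ k 5)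
        * (X ^ (2 * (k 1 + 2 * k 2 + 3 * k 3 + 4 * k 4 + 5 * k 5))
            * q ^ (k 1 + 2 * k 2 + 3 * k 3 + 4 * k 4 + 5 * k 5)) := by
    intro k
    rw [← hupow (k 1 + 2 * k 2 + 3 * k 3 + 4 * k 4 + 5 * k 5)]
    rw [Fin.prod_univ_six, hg0, hg1, hg2, hg3, hg4, hg5]
    simp only [map_mul, map_pow, mul_pow]
    ring
  have hqpow : q ^ n = ∑ k ∈ piAntidiag (univ : Finset (Fin 6)) n,
      ((Nat.multinomial univ k : A⟦X⟧) * ∏ i, g i ^ k i) := by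
    conv_lhs => rw [hqg]
    rw [Finset.sum_pow_eq_sum_piAntidiag]
  have hVn : V ^ n * q ^ n = 1 := by rw [← mul_pow, hV, one_pow]
  have hgen : ∀ m : ℕ,
      coeff (2 * n - 1) (X ^ (2 * m) * (q ^ m * (V ^ n * d⁄dX A u)))
      = if m = n - 1 then 2 else 0 := by
    intro m
    rcases lt_or_ge m n with hw | hw
    · have hqV : q ^ m * V ^ n = V ^ (n - m) := by
        have hn' : n = m + (n - m) := by omega
        rw [hn', pow_add, ← mul_assoc, ← mul_pow, mul_comm q V, hV, one_pow, one_mul,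
          Nat.add_sub_cancel_left]
      rw [show q ^ m * (V ^ n * d⁄dX A u) = (q ^ m * V ^ n) * d⁄dX A u from
        (mul_assoc _ _ _).symm, hqV]
      rw [coeff_X_pow_mul', if_pos (by omega)]
      rcases eq_or_ne m (n - 1) with hw1 | hw1
      · rw [if_pos hw1, show n - m = 1 by omega, pow_one,
          show 2 * n - 1 - 2 * m = 1 by omega]
        exact E_one hu' hV
      · rw [if_neg hw1, show n - m = (n - m - 2) + 2 by omega,
          show 2 * n - 1 - 2 * m = 2 * (n - m - 2) + 3 by omega]
        exact E_big hu' hV (n - m - 2)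
    · rw [coeff_X_pow_mul', if_neg (by omega), if_neg (by omega)]
  have hchain : coeff (2 * n - 1) (d⁄dX A u)
      = ∑ k ∈ (piAntidiag (univ : Finset (Fin 6)) n).filter
          (fun k => k 1 + 2 * k 2 + 3 * k 3 + 4 * k 4 + 5 * k 5 = n - 1),
        (Nat.multinomial univ k : A)
          * (b1 ^ k 1 * b2 ^ k 2 * b3 ^ k 3 * b4 ^ k 4 * b5 ^ k 5) * 2 := by
    have h1 : d⁄dX A u = V ^ n * (q ^ n * d⁄dX A u) := by
      rw [← mul_assoc, hVn, one_mul]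
    conv_lhs => rw [h1, hqpow]
    rw [Finset.sum_mul, Finset.mul_sum, map_sum]
    rw [Finset.sum_filter]
    refine Finset.sum_congr rfl fun k hk => ?_
    have hre : V ^ n * ((Nat.multinomial univ k : A⟦X⟧) * (∏ i, g i ^ k i) * d⁄dX A u)
        = C (Nat.multinomial univ k : A)
          * (C (b1 ^ k 1 * b2 ^ k 2 * b3 ^ k 3 * b4 ^ k 4 * b5 ^ k 5)
            * (X ^ (2 * (k 1 + 2 * k 2 + 3 * k 3 + 4 * k 4 + 5 * k 5))
              * (q ^ (k 1 + 2 * k 2 + 3 * k 3 + 4 * k 4 + 5 * k 5) * (V ^ n * d⁄dX A u)))) := by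
      rw [hprod k, ← map_natCast (C (R := A))]
      ring
    rw [hre, coeff_C_mul, coeff_C_mul, hgen (k 1 + 2 * k 2 + 3 * k 3 + 4 * k 4 + 5 * k 5)]
    split_ifs with h
    · ring
    · ring
  have hreindex : ∑ k ∈ (piAntidiag (univ : Finset (Fin 6)) n).filter
          (fun k => k 1 + 2 * k 2 + 3 * k 3 + 4 * k 4 + 5 * k 5 = n - 1),
        (Nat.multinomial univ k : A)
          * (b1 ^ k 1 * b2 ^ k 2 * b3 ^ k 3 * b4 ^ k 4 * b5 ^ k 5)
      = ∑ k ∈ (Fintype.piFinset fun _ : Fin 5 => Finset.range n) |>.filter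
          (fun k => k 0 + 2 * k 1 + 3 * k 2 + 4 * k 3 + 5 * k 4 = n - 1),
        (lagrangeMultinomial k : A) *
          (b1 ^ k 0 * b2 ^ k 1 * b3 ^ k 2 * b4 ^ k 3 * b5 ^ k 4) := by
    refine Finset.sum_nbij' (i := fun k => Fin.tail k)
      (j := fun k => (Fin.cons (k 1 + 2 * k 2 + 3 * k 3 + 4 * k 4 + 1) k : Fin 6 → ℕ))
      ?_ ?_ ?_ ?_ ?_
    · intro k hk
      rw [Finset.mem_filter, Finset.mem_piAntidiag, Fin.sum_univ_six] at hk
      obtain ⟨⟨hsum, -⟩, hcond⟩ := hk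
      rw [Finset.mem_filter, Fintype.mem_piFinset]
      constructor
      · intro i
        rw [Finset.mem_range]
        fin_cases i
        · show k 1 < n; omega
        · show k 2 < n; omega
        · show k 3 < n; omega
        · show k 4 < n; omega
        · show k 5 < n; omega
      · show k 1 + 2 * k 2 + 3 * k 3 + 4 * k 4 + 5 * k 5 = n - 1
        exact hcond
    · intro a ha
      rw [Finset.mem_filter, Fintype.mem_piFinset] at ha
      obtain ⟨-, hcond⟩ := ha
      rw [Finset.mem_filter, Finset.mem_piAntidiag, Fin.sum_univ_six]
      refine ⟨⟨?_, fun i _ => Finset.mem_univ i⟩, ?_⟩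
      · show (a 1 + 2 * a 2 + 3 * a 3 + 4 * a 4 + 1) + a 0 + a 1 + a 2 + a 3 + a 4 = n
        omega
      · show a 0 + 2 * a 1 + 3 * a 2 + 4 * a 3 + 5 * a 4 = n - 1
        exact hcond
    · intro k hk
      rw [Finset.mem_filter, Finset.mem_piAntidiag, Fin.sum_univ_six] at hk
      obtain ⟨⟨hsum, -⟩, hcond⟩ := hk
      have hval : Fin.tail k 1 + 2 * Fin.tail k 2 + 3 * Fin.tail k 3 + 4 * Fin.tail k 4 + 1
          = k 0 := by
        show k 2 + 2 * k 3 + 3 * k 4 + 4 * k 5 + 1 = k 0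
        omega
      show Fin.cons (Fin.tail k 1 + 2 * Fin.tail k 2 + 3 * Fin.tail k 3 + 4 * Fin.tail k 4 + 1)
        (Fin.tail k) = k
      rw [hval]
      exact Fin.cons_self_tail k
    · intro a ha
      exact Fin.tail_cons _ _
    · intro k hk
      rw [Finset.mem_filter, Finset.mem_piAntidiag, Fin.sum_univ_six] at hk
      obtain ⟨⟨hsum, -⟩, hcond⟩ := hk
      have hval : Fin.tail k 1 + 2 * Fin.tail k 2 + 3 * Fin.tail k 3 + 4 * Fin.tail k 4 + 1
          = k 0 := by
        show k 2 + 2 * k 3 + 3 * k 4 + 4 * k 5 + 1 = k 0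
        omega
      unfold lagrangeMultinomial
      rw [hval, Fin.cons_self_tail]
      rfl
  have hderiv : coeff (2 * n - 1) (d⁄dX A u) = coeff (2 * n) u * ((2 * n : ℕ) : A) := by
    rw [coeff_derivative, show 2 * n - 1 + 1 = 2 * n by omega]
    congr 1
    rw [← Nat.cast_add_one, show 2 * n - 1 + 1 = 2 * n by omega]
  have h2n : ((2 * n : ℕ) : A) * coeff (2 * n) u
      = 2 * ∑ k ∈ (Fintype.piFinset fun _ : Fin 5 => Finset.range n) |>.filter
          (fun k => k 0 + 2 * k 1 + 3 * k 2 + 4 * k 3 + 5 * k 4 = n - 1),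
        (lagrangeMultinomial k : A) *
          (b1 ^ k 0 * b2 ^ k 1 * b3 ^ k 2 * b4 ^ k 3 * b5 ^ k 4) := by
    rw [mul_comm, ← hderiv, hchain, ← hreindex, Finset.mul_sum]
    exact Finset.sum_congr rfl fun k _ => by ring
  have h2 : IsUnit (2 : A) := by
    have := nat_isUnit (A := A) 2 (by omega)
    simpa using this
  apply h2.mul_left_cancel
  have hcast : (2 : A) * ((n : A) * coeff (2 * n) u) = ((2 * n : ℕ) : A) * coeff (2 * n) u := by
    push_cast
    ring
  rw [hcast, h2n]
end QAlg

end Stmt10Aux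

section Transfer

open Stmt10Aux in
theorem stmt10_universal (n : ℕ) (hn : 1 ≤ n) :
    ((n : ℕ) : MvPolynomial (Fin 5) ℤ) * PowerSeries.coeff (2 * n)
        (sol (MvPolynomial.X 0) (MvPolynomial.X 1) (MvPolynomial.X 2)
          (MvPolynomial.X 3) (MvPolynomial.X 4)) =
      ∑ k ∈ (Fintype.piFinset fun _ : Fin 5 => Finset.range n) |>.filter
          (fun k => k 0 + 2 * k 1 + 3 * k 2 + 4 * k 3 + 5 * k 4 = n - 1),
        (lagrangeMultinomial k : MvPolynomial (Fin 5) ℤ) *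
          ((MvPolynomial.X 0 : MvPolynomial (Fin 5) ℤ) ^ k 0 * MvPolynomial.X 1 ^ k 1
            * MvPolynomial.X 2 ^ k 2 * MvPolynomial.X 3 ^ k 3 * MvPolynomial.X 4 ^ k 4) := by
  set uZ : (MvPolynomial (Fin 5) ℤ)⟦X⟧ :=
    sol (MvPolynomial.X 0) (MvPolynomial.X 1) (MvPolynomial.X 2)
      (MvPolynomial.X 3) (MvPolynomial.X 4) with huZ_def
  set ι : MvPolynomial (Fin 5) ℤ →+* MvPolynomial (Fin 5) ℚ :=
    (MvPolynomial.map (Int.castRingHom ℚ)) with hι_def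
  have hι : Function.Injective ι :=
    MvPolynomial.map_injective (Int.castRingHom ℚ) Int.cast_injective
  apply hι
  have hZ : uZ = step (MvPolynomial.X 0) (MvPolynomial.X 1) (MvPolynomial.X 2)
      (MvPolynomial.X 3) (MvPolynomial.X 4) uZ := sol_eq _ _ _ _ _
  have hB : PowerSeries.map ι uZ
      = step (MvPolynomial.X 0) (MvPolynomial.X 1) (MvPolynomial.X 2)
          (MvPolynomial.X 3) (MvPolynomial.X 4) (PowerSeries.map ι uZ) := by
    have := map_sat ι hZ
    simpa only [hι_def, MvPolynomial.map_X] using this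
  have hkey := key (MvPolynomial.X 0) (MvPolynomial.X 1) (MvPolynomial.X 2)
    (MvPolynomial.X 3) (MvPolynomial.X 4) (PowerSeries.map ι uZ) hB n hn
  calc ι (((n : ℕ) : MvPolynomial (Fin 5) ℤ) * PowerSeries.coeff (2 * n) uZ)
      = ((n : ℕ) : MvPolynomial (Fin 5) ℚ)
          * PowerSeries.coeff (2 * n) (PowerSeries.map ι uZ) := by
        rw [map_mul, map_natCast, PowerSeries.coeff_map]
    _ = ∑ k ∈ (Fintype.piFinset fun _ : Fin 5 => Finset.range n) |>.filter
          (fun k => k 0 + 2 * k 1 + 3 * k 2 + 4 * k 3 + 5 * k 4 = n - 1),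
        (lagrangeMultinomial k : MvPolynomial (Fin 5) ℚ) *
          ((MvPolynomial.X 0 : MvPolynomial (Fin 5) ℚ) ^ k 0 * MvPolynomial.X 1 ^ k 1
            * MvPolynomial.X 2 ^ k 2 * MvPolynomial.X 3 ^ k 3 * MvPolynomial.X 4 ^ k 4) := hkey
    _ = ι (∑ k ∈ (Fintype.piFinset fun _ : Fin 5 => Finset.range n) |>.filter
          (fun k => k 0 + 2 * k 1 + 3 * k 2 + 4 * k 3 + 5 * k 4 = n - 1),
        (lagrangeMultinomial k : MvPolynomial (Fin 5) ℤ) *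
          ((MvPolynomial.X 0 : MvPolynomial (Fin 5) ℤ) ^ k 0 * MvPolynomial.X 1 ^ k 1
            * MvPolynomial.X 2 ^ k 2 * MvPolynomial.X 3 ^ k 3 * MvPolynomial.X 4 ^ k 4)) := by
        rw [map_sum]
        refine Finset.sum_congr rfl fun k _ => ?_
        simp only [map_mul, map_natCast, map_pow, hι_def, MvPolynomial.map_X]

end Transfer

theorem stmt10 {R : Type*} [CommRing R] (b1 b2 b3 b4 b5 : R) (u : PowerSeries R)
    (hu : SatisfiesCurveEqAtInfinity b1 b2 b3 b4 b5 u) :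
    ∀ n : ℕ, 1 ≤ n →
      (n : R) * coeff (2 * n) u =
        ∑ k ∈ (Fintype.piFinset fun _ : Fin 5 => Finset.range n) |>.filter
            (fun k => k 0 + 2 * k 1 + 3 * k 2 + 4 * k 3 + 5 * k 4 = n - 1),
          (lagrangeMultinomial k : R) *
            (b1 ^ k 0 * b2 ^ k 1 * b3 ^ k 2 * b4 ^ k 3 * b5 ^ k 4) := by
  intro n hn
  classical
  set uZ : (MvPolynomial (Fin 5) ℤ)⟦X⟧ :=
    Stmt10Aux.sol (MvPolynomial.X 0) (MvPolynomial.X 1) (MvPolynomial.X 2)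
      (MvPolynomial.X 3) (MvPolynomial.X 4) with huZ_def
  have hZ : uZ = Stmt10Aux.step (MvPolynomial.X 0) (MvPolynomial.X 1) (MvPolynomial.X 2)
      (MvPolynomial.X 3) (MvPolynomial.X 4) uZ := Stmt10Aux.sol_eq _ _ _ _ _
  set ψ : MvPolynomial (Fin 5) ℤ →+* R :=
    MvPolynomial.eval₂Hom (Int.castRingHom R) ![b1, b2, b3, b4, b5] with hψ_def
  have hψ0 : ψ (MvPolynomial.X 0) = b1 := by rw [hψ_def, MvPolynomial.eval₂Hom_X']; rfl
  have hψ1 : ψ (MvPolynomial.X 1) = b2 := by rw [hψ_def, MvPolynomial.eval₂Hom_X']; rfl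
  have hψ2 : ψ (MvPolynomial.X 2) = b3 := by rw [hψ_def, MvPolynomial.eval₂Hom_X']; rfl
  have hψ3 : ψ (MvPolynomial.X 3) = b4 := by rw [hψ_def, MvPolynomial.eval₂Hom_X']; rfl
  have hψ4 : ψ (MvPolynomial.X 4) = b5 := by rw [hψ_def, MvPolynomial.eval₂Hom_X']; rfl
  have hR : PowerSeries.map ψ uZ = Stmt10Aux.step b1 b2 b3 b4 b5 (PowerSeries.map ψ uZ) := by
    have := Stmt10Aux.map_sat ψ hZ
    rwa [hψ0, hψ1, hψ2, hψ3, hψ4] at this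
  have huu : PowerSeries.map ψ uZ = u := Stmt10Aux.uniq hR hu
  have huniv := stmt10_universal n hn
  have := congrArg ψ huniv
  rw [map_mul, map_natCast, map_sum] at this
  calc (n : R) * coeff (2 * n) u
      = (n : R) * ψ (coeff (2 * n) uZ) := by rw [← huu, PowerSeries.coeff_map]
    _ = ∑ k ∈ (Fintype.piFinset fun _ : Fin 5 => Finset.range n) |>.filter
          (fun k => k 0 + 2 * k 1 + 3 * k 2 + 4 * k 3 + 5 * k 4 = n - 1),
        ψ ((lagrangeMultinomial k : MvPolynomial (Fin 5) ℤ) *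
          ((MvPolynomial.X 0 : MvPolynomial (Fin 5) ℤ) ^ k 0 * MvPolynomial.X 1 ^ k 1
            * MvPolynomial.X 2 ^ k 2 * MvPolynomial.X 3 ^ k 3 * MvPolynomial.X 4 ^ k 4)) := this
    _ = _ := by
        refine Finset.sum_congr rfl fun k _ => ?_
        rw [map_mul, map_natCast, map_mul, map_mul, map_mul, map_mul,
          map_pow, map_pow, map_pow, map_pow, map_pow, hψ0, hψ1, hψ2, hψ3, hψ4]
end

section
/- Let c ∈ ℚ_p[z] be a polynomial whose constant coefficient is y0^2 for some y0 ∈ ℚ_p with y0 ≠ 0. Then there exists a unique formal power series y ∈ ℚ_p[[z]] with constant coefficient y0 such that y^2 = c in ℚ_p[[z]]; moreover there exist real constants A and B such that for all n ≥ 0 the n-th coefficient a_n of y satisfies ‖a_n‖_p ≤ exp(A·n + B) (i.e., the p-adic valuations of the coefficients of y are bounded below by a linear polynomial in n, so y has positive radius of convergence). -/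
open PowerSeries

noncomputable def sqCoeff {p : ℕ} [Fact p.Prime] (c : Polynomial ℚ_[p]) (y0 : ℚ_[p]) :
    ℕ → ℚ_[p]
  | 0 => y0
  | (m+1) => (c.coeff (m+1) - ∑ i ∈ (Finset.Ioo 0 (m+1)).attach,
      sqCoeff c y0 i.1 * sqCoeff c y0 ((m+1) - i.1)) / (2*y0)
  decreasing_by
  · exact (Finset.mem_Ioo.mp i.2).2
  · have := (Finset.mem_Ioo.mp i.2).1; omega

lemma sqCoeff_zero {p : ℕ} [Fact p.Prime] (c : Polynomial ℚ_[p]) (y0 : ℚ_[p]) :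
    sqCoeff c y0 0 = y0 := by rw [sqCoeff]

lemma sqCoeff_succ {p : ℕ} [Fact p.Prime] (c : Polynomial ℚ_[p]) (y0 : ℚ_[p]) (m : ℕ) :
    sqCoeff c y0 (m+1) = (c.coeff (m+1) - ∑ i ∈ Finset.Ioo 0 (m+1),
      sqCoeff c y0 i * sqCoeff c y0 ((m+1) - i)) / (2*y0) := by
  rw [sqCoeff, Finset.sum_attach _ (fun i => sqCoeff c y0 i * sqCoeff c y0 (m+1-i))]

lemma coeff_sq_split {p : ℕ} [Fact p.Prime] (y : PowerSeries ℚ_[p]) (n : ℕ) :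
    coeff (n+1) (y^2) = coeff 0 y * coeff (n+1) y
      + coeff (n+1) y * coeff 0 y
      + ∑ i ∈ Finset.Ioo 0 (n+1), coeff i y * coeff (n+1-i) y := by
  rw [pow_two, coeff_mul, Finset.Nat.sum_antidiagonal_eq_sum_range_succ_mk]
  rw [Finset.sum_range_succ]
  have h0 : (0:ℕ) ∈ Finset.range (n+1) := by simp
  rw [← Finset.add_sum_erase _ _ h0]
  have : (Finset.range (n+1)).erase 0 = Finset.Ioo 0 (n+1) := by
    ext x; simp [Finset.mem_erase, Nat.pos_iff_ne_zero]
  rw [this]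
  simp; ring

lemma key_rec {p : ℕ} [Fact p.Prime] (c : Polynomial ℚ_[p]) (y0 : ℚ_[p])
    (y : PowerSeries ℚ_[p]) (h1 : constantCoeff y = y0)
    (h2 : y ^ 2 = (c : PowerSeries ℚ_[p])) (n : ℕ) :
    (2*y0) * coeff (n+1) y = c.coeff (n+1)
      - ∑ i ∈ Finset.Ioo 0 (n+1), coeff i y * coeff (n+1-i) y := by
  have h3 : coeff (n+1) (y^2) = c.coeff (n+1) := by
    rw [h2, Polynomial.coeff_coe]
  rw [coeff_sq_split] at h3
  have h0 : coeff 0 y = y0 := by rw [coeff_zero_eq_constantCoeff, h1]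
  rw [h0] at h3
  linear_combination h3

theorem stmt11 (p : ℕ) [Fact p.Prime] (c : Polynomial ℚ_[p]) (y0 : ℚ_[p])
    (hy0 : y0 ≠ 0) (hc : c.coeff 0 = y0 ^ 2) :
    (∃! y : PowerSeries ℚ_[p],
        constantCoeff y = y0 ∧ y ^ 2 = (c : PowerSeries ℚ_[p])) ∧
    ∀ y : PowerSeries ℚ_[p],
      constantCoeff y = y0 → y ^ 2 = (c : PowerSeries ℚ_[p]) →
        ∃ A B : ℝ, ∀ n : ℕ, ‖coeff n y‖ ≤ Real.exp (A * n + B) := by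
  have h2y0 : (2:ℚ_[p]) * y0 ≠ 0 := mul_ne_zero two_ne_zero hy0
  constructor
  · -- existence and uniqueness
    have hy1 : constantCoeff (PowerSeries.mk (sqCoeff c y0)) = y0 := by
      rw [← coeff_zero_eq_constantCoeff, coeff_mk, sqCoeff_zero]
    have hysq : (PowerSeries.mk (sqCoeff c y0)) ^ 2 = (c : PowerSeries ℚ_[p]) := by
      ext n
      rcases n with _ | m
      · rw [Polynomial.coeff_coe, hc, coeff_zero_eq_constantCoeff, map_pow, hy1]
      · rw [coeff_sq_split, Polynomial.coeff_coe]
        simp only [coeff_mk]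
        rw [sqCoeff_zero, sqCoeff_succ]
        field_simp
        ring
    refine ⟨PowerSeries.mk (sqCoeff c y0), ⟨hy1, hysq⟩, ?_⟩
    rintro z ⟨hz1, hz2⟩
    have hyz : (z - PowerSeries.mk (sqCoeff c y0)) * (z + PowerSeries.mk (sqCoeff c y0)) = 0 := by
      have : (z - PowerSeries.mk (sqCoeff c y0)) * (z + PowerSeries.mk (sqCoeff c y0))
          = z^2 - (PowerSeries.mk (sqCoeff c y0))^2 := by ring
      rw [this, hz2, hysq, sub_self]
    rcases mul_eq_zero.mp hyz with h | h
    · exact sub_eq_zero.mp h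
    · exfalso
      have hcc := congrArg (constantCoeff) h
      rw [map_add, hz1, hy1, map_zero] at hcc
      have h2 : (2:ℚ_[p]) * y0 = 0 := by linear_combination hcc
      exact h2y0 h2
  · -- growth bound
    intro y hy1 hy2
    set a : ℕ → ℚ_[p] := fun n => coeff n y with ha
    set C : ℝ := 1 + ∑ k ∈ Finset.range (c.natDegree+1), ‖c.coeff k‖ with hCdef
    have hC1 : (1:ℝ) ≤ C := by
      have : (0:ℝ) ≤ ∑ k ∈ Finset.range (c.natDegree+1), ‖c.coeff k‖ :=
        Finset.sum_nonneg fun _ _ => norm_nonneg _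
      linarith
    have hCk : ∀ k, ‖c.coeff k‖ ≤ C := by
      intro k
      by_cases hk : k ≤ c.natDegree
      · have : ‖c.coeff k‖ ≤ ∑ j ∈ Finset.range (c.natDegree+1), ‖c.coeff j‖ :=
          Finset.single_le_sum (fun j _ => norm_nonneg _) (by simp; omega)
        linarith
      · rw [Polynomial.coeff_eq_zero_of_natDegree_lt (by omega), norm_zero]; linarith
    have hn2y0 : (0:ℝ) < ‖(2:ℚ_[p])*y0‖ := norm_pos_iff.mpr h2y0
    set t : ℝ := ‖(2:ℚ_[p])*y0‖⁻¹ with htdef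
    have ht : 0 < t := inv_pos.mpr hn2y0
    set D : ℝ := max (max 1 ‖y0‖) (2*t*C) with hDdef
    set E : ℝ := max 1 (2*t*D) with hEdef
    have hD1 : (1:ℝ) ≤ D := le_trans (le_max_left _ _) (le_max_left _ _)
    have hDy0 : ‖y0‖ ≤ D := le_trans (le_max_right _ _) (le_max_left _ _)
    have hDC : 2*t*C ≤ D := le_max_right _ _
    have hE1 : (1:ℝ) ≤ E := le_max_left _ _
    have hED : 2*t*D ≤ E := le_max_right _ _
    clear_value C t D E
    have hrec : ∀ n : ℕ, ‖a (n+1)‖ ≤ t * (C +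
        ‖∑ i ∈ Finset.Ioo 0 (n+1), a i * a (n+1-i)‖) := by
      intro n
      have hk := key_rec c y0 y hy1 hy2 n
      have hnm : ‖(2:ℚ_[p])*y0‖ * ‖a (n+1)‖ = ‖c.coeff (n+1)
          - ∑ i ∈ Finset.Ioo 0 (n+1), a i * a (n+1-i)‖ := by
        rw [← norm_mul, hk]
      have h4 : ‖(2:ℚ_[p])*y0‖ * ‖a (n+1)‖ ≤ C + ‖∑ i ∈ Finset.Ioo 0 (n+1), a i * a (n+1-i)‖ := by
        rw [hnm]
        calc ‖_ - _‖ ≤ ‖c.coeff (n+1)‖ + ‖∑ i ∈ Finset.Ioo 0 (n+1), a i * a (n+1-i)‖ :=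
              norm_sub_le _ _
          _ ≤ _ := by have := hCk (n+1); linarith
      calc ‖a (n+1)‖ = t * (‖(2:ℚ_[p])*y0‖ * ‖a (n+1)‖) := by
            rw [htdef, inv_mul_cancel_left₀ hn2y0.ne']
        _ ≤ t * (C + ‖∑ i ∈ Finset.Ioo 0 (n+1), a i * a (n+1-i)‖) :=
            mul_le_mul_of_nonneg_left h4 ht.le
    have main : ∀ n : ℕ, 1 ≤ n → ‖a n‖ ≤ D * E^(n-1) := by
      intro n
      induction n using Nat.strong_induction_on with
      | _ n IH =>
        intro hn
        match n, hn with
        | 1, _ =>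
          have h := hrec 0
          have he : Finset.Ioo 0 (0+1) = ∅ := rfl
          rw [he, Finset.sum_empty, norm_zero, add_zero] at h
          norm_num at h ⊢
          nlinarith
        | (k+2), _ =>
          have hE0 : (0:ℝ) < E := by linarith
          have hEk : (1:ℝ) ≤ E^k := one_le_pow₀ hE1
          have hEk1 : (1:ℝ) ≤ E^(k+1) := one_le_pow₀ hE1
          have hsum : ‖∑ i ∈ Finset.Ioo 0 (k+2), a i * a (k+2-i)‖ ≤ D^2 * E^k := by
            apply IsUltrametricDist.norm_sum_le_of_forall_le_of_nonneg
            · positivity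
            · intro i hi
              rcases Finset.mem_Ioo.mp hi with ⟨hi1, hi2⟩
              have e1 : ‖a i‖ ≤ D * E^(i-1) := IH i (by omega) (by omega)
              have e2 : ‖a (k+2-i)‖ ≤ D * E^(k+2-i-1) := IH (k+2-i) (by omega) (by omega)
              have hnn : (0:ℝ) ≤ D * E^(i-1) := by positivity
              have hexp : (i-1)+(k+2-i-1) = k := by omega
              calc ‖a i * a (k+2-i)‖ = ‖a i‖ * ‖a (k+2-i)‖ := norm_mul _ _
                _ ≤ (D * E^(i-1)) * (D * E^(k+2-i-1)) :=
                    mul_le_mul e1 e2 (norm_nonneg _) hnn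
                _ = D^2 * (E^(i-1) * E^(k+2-i-1)) := by ring
                _ = D^2 * E^k := by rw [← pow_add, hexp]
          have h := hrec (k+1)
          have h5 : t * C ≤ D/2 := by linarith
          have h6 : t * (D^2 * E^k) ≤ D * E^(k+1) / 2 := by
            have hh := mul_le_mul_of_nonneg_right hED
              (show (0:ℝ) ≤ D*E^k by positivity)
            calc t * (D^2 * E^k) = (2*t*D) * (D*E^k) / 2 := by ring
              _ ≤ E * (D*E^k) / 2 := by linarith
              _ = D * E^(k+1) / 2 := by ring
          calc ‖a (k+2)‖ ≤ t * (C + ‖∑ i ∈ Finset.Ioo 0 (k+2), a i * a (k+2-i)‖) := h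
            _ ≤ t * (C + D^2 * E^k) :=
                mul_le_mul_of_nonneg_left (by linarith) ht.le
            _ = t * C + t * (D^2 * E^k) := by ring
            _ ≤ D/2 + D * E^(k+1)/2 := by linarith
            _ ≤ D * E^(k+1) := by nlinarith
            _ = D * E^((k+2)-1) := by norm_num
    refine ⟨Real.log E, Real.log D, ?_⟩
    intro n
    have hD1' : (1:ℝ) ≤ D := hD1
    have hbound : ‖a n‖ ≤ D * E^n := by
      rcases Nat.eq_zero_or_pos n with rfl | hn
      · have h0 : a 0 = y0 := by rw [ha]; simp [coeff_zero_eq_constantCoeff, hy1]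
        rw [h0, pow_zero, mul_one]
        exact le_trans hDy0 (le_refl D)
      · calc ‖a n‖ ≤ D * E^(n-1) := main n hn
          _ ≤ D * E^n := by
            apply mul_le_mul_of_nonneg_left _ (by linarith)
            exact pow_le_pow_right₀ (by linarith) (by omega)
    calc ‖coeff n y‖ = ‖a n‖ := rfl
      _ ≤ D * E^n := hbound
      _ = Real.exp (Real.log E * n + Real.log D) := by
          rw [Real.exp_add, mul_comm (Real.log E) (n:ℝ), Real.exp_nat_mul,
            Real.exp_log (by linarith : (0:ℝ) < E), Real.exp_log (by linarith : (0:ℝ) < D),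
            mul_comm]
end
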